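/- arXiv:math/0503065 — 3 statements merged into one kernel-verified Lean document; each statement's English description precedes it below -/
import Mathlib

section
/- There exists a constant C > 0 such that for all integers n ≥ 2 and all x ∈ ℤ² with 0 < |x| < n the following holds: let (S_m)_{m≥0} be simple random walk on ℤ² started at x, and let η be the smallest m > 0 such that S_m = (0,0) or |S_m| ≥ n. Then (log n − log|x| − C)/log n ≤ P(S_η = (0,0)) ≤ (log n − log|x| + C)/log n. -/
open MeasureTheory ProbabilityTheory Classical

/-- The uniform step distribution on the four unit steps of `ℤ²`. -/
noncomputable def stepDist : Measure (ℤ × ℤ) :=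
  (4 : ENNReal)⁻¹ • (Measure.dirac (1, 0) + Measure.dirac (-1, 0) +
    Measure.dirac (0, 1) + Measure.dirac (0, -1))

/-- The Euclidean norm of a point of `ℤ²`. -/
noncomputable def znorm (x : ℤ × ℤ) : ℝ :=
  Real.sqrt ((x.1 : ℝ) ^ 2 + (x.2 : ℝ) ^ 2)

/-- The simple random walk started at `x`, after `n` steps. -/
def walkFrom {Ω : Type} (X : ℕ → Ω → ℤ × ℤ) (x : ℤ × ℤ) (n : ℕ) (ω : Ω) : ℤ × ℤ :=
  x + ∑ i ∈ Finset.Icc 1 n, X i ω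

/-- `η`: the smallest `m > 0` such that the walk started at `x` hits the origin
or leaves the open ball of radius `n` (and `0` if there is no such `m`). -/
noncomputable def hitTime {Ω : Type} (X : ℕ → Ω → ℤ × ℤ) (x : ℤ × ℤ) (n : ℕ) (ω : Ω) : ℕ :=
  sInf {m : ℕ | 0 < m ∧ (walkFrom X x m ω = 0 ∨ (n : ℝ) ≤ znorm (walkFrom X x m ω))}

/-! ## basic geometry -/

def sqn (z : ℤ × ℤ) : ℤ := z.1 ^ 2 + z.2 ^ 2

def ann (n : ℕ) (z : ℤ × ℤ) : Prop := z ≠ 0 ∧ sqn z < (n : ℤ) ^ 2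

def V : Finset (ℤ × ℤ) := {(1, 0), (-1, 0), (0, 1), (0, -1)}

lemma sqn_cast (z : ℤ × ℤ) : ((sqn z : ℤ) : ℝ) = (z.1 : ℝ) ^ 2 + (z.2 : ℝ) ^ 2 := by
  simp only [sqn]; push_cast; ring

lemma znorm_eq_sqrt (z : ℤ × ℤ) : znorm z = Real.sqrt ((sqn z : ℤ) : ℝ) := by
  rw [znorm, sqn_cast]

lemma sqn_nonneg (z : ℤ × ℤ) : 0 ≤ sqn z := by unfold sqn; positivity

lemma one_le_sqn {z : ℤ × ℤ} (hz : z ≠ 0) : 1 ≤ sqn z := by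
  rcases z with ⟨a, b⟩
  have : a ≠ 0 ∨ b ≠ 0 := by
    by_contra h
    push_neg at h
    exact hz (by simp [Prod.ext_iff, h.1, h.2])
  rcases this with h | h
  · have : 1 ≤ a ^ 2 := by nlinarith [sq_nonneg a, Int.one_le_abs (by simpa using h), sq_abs a]
    simp only [sqn]; nlinarith [sq_nonneg b]
  · have : 1 ≤ b ^ 2 := by nlinarith [sq_nonneg b, Int.one_le_abs (by simpa using h), sq_abs b]
    simp only [sqn]; nlinarith [sq_nonneg a]

lemma znorm_pos_iff (z : ℤ × ℤ) : 0 < znorm z ↔ z ≠ 0 := by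
  rw [znorm_eq_sqrt, Real.sqrt_pos]
  constructor
  · intro h hz; rw [hz] at h; simp [sqn] at h
  · intro hz
    have := one_le_sqn hz
    exact_mod_cast lt_of_lt_of_le one_pos (by exact_mod_cast this)

lemma znorm_lt_iff (z : ℤ × ℤ) (n : ℕ) : znorm z < n ↔ sqn z < (n : ℤ) ^ 2 := by
  rw [znorm_eq_sqrt]
  rw [show ((n : ℝ)) = Real.sqrt ((((n : ℤ) ^ 2 : ℤ)) : ℝ) by
    push_cast; rw [Real.sqrt_sq (by positivity)]]
  rw [Real.sqrt_lt_sqrt_iff (by exact_mod_cast sqn_nonneg z)]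
  exact_mod_cast Iff.rfl

lemma le_znorm_iff (z : ℤ × ℤ) (n : ℕ) : (n : ℝ) ≤ znorm z ↔ (n : ℤ) ^ 2 ≤ sqn z := by
  rw [← not_lt, ← not_lt, not_iff_not, znorm_lt_iff]

lemma ann_iff (n : ℕ) (z : ℤ × ℤ) : ann n z ↔ (0 < znorm z ∧ znorm z < n) := by
  rw [ann, znorm_pos_iff, znorm_lt_iff]

lemma measurableSet_zz (s : Set (ℤ × ℤ)) : MeasurableSet s :=
  s.to_countable.measurableSet

lemma stepDist_singleton (z : ℤ × ℤ) :
    stepDist {z} = if z ∈ V then (4 : ENNReal)⁻¹ else 0 := by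
  have h : ∀ w : ℤ × ℤ, Measure.dirac w {z} = if w = z then (1 : ENNReal) else 0 := by
    intro w
    rw [Measure.dirac_apply' _ (measurableSet_zz _)]
    by_cases h : w = z <;> simp [h, Set.indicator]
  simp only [stepDist, Measure.smul_apply, Measure.add_apply, h, smul_eq_mul]
  by_cases h1 : z = (1,0)
  · subst h1; norm_num [V]
  by_cases h2 : z = (-1,0)
  · subst h2; norm_num [V]
  by_cases h3 : z = (0,1)
  · subst h3; norm_num [V]
  by_cases h4 : z = (0,-1)
  · subst h4; norm_num [V]
  have : z ∉ V := by simp [V, h1, h2, h3, h4]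
  simp [this, Ne.symm h1, Ne.symm h2, Ne.symm h3, Ne.symm h4]

lemma stepDist_compl_V : stepDist ((V : Set (ℤ × ℤ)))ᶜ = 0 := by
  have h : ∀ w : ℤ × ℤ, w ∈ V → Measure.dirac w ((V : Set (ℤ × ℤ)))ᶜ = 0 := by
    intro w hw
    rw [Measure.dirac_apply' _ (measurableSet_zz _)]
    simp [Set.indicator, hw]
  simp only [stepDist, Measure.smul_apply, Measure.add_apply, smul_eq_mul]
  rw [h _ (by simp [V]), h _ (by simp [V]), h _ (by simp [V]), h _ (by simp [V])]
  simp

lemma tsum_stepDist_mul (g : ℤ × ℤ → ENNReal) :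
    ∑' e : ℤ × ℤ, stepDist {e} * g e = 4⁻¹ * ∑ e ∈ V, g e := by
  rw [tsum_eq_sum (s := V) (by intro e he; rw [stepDist_singleton, if_neg he, zero_mul])]
  rw [Finset.mul_sum]
  refine Finset.sum_congr rfl fun e he => ?_
  rw [stepDist_singleton, if_pos he]

/-! ## paths -/

def psum {m : ℕ} (a : Fin m → ℤ × ℤ) (k : ℕ) : ℤ × ℤ :=
  ∑ i : Fin m, if (i : ℕ) < k then a i else 0

def Good (n : ℕ) (y : ℤ × ℤ) {m : ℕ} (a : Fin m → ℤ × ℤ) : Prop :=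
  (∀ k, 0 < k → k < m → ann n (y + psum a k)) ∧ y + psum a m = 0

noncomputable def wt {m : ℕ} (a : Fin m → ℤ × ℤ) : ENNReal :=
  ∏ i : Fin m, stepDist {a i}

noncomputable def Pm (n : ℕ) (y : ℤ × ℤ) (m : ℕ) : ENNReal :=
  ∑' a : Fin m → ℤ × ℤ, if Good n y a then wt a else 0

noncomputable def Mh (n : ℕ) (y : ℤ × ℤ) : ENNReal := ∑' m, Pm n y (m + 1)

lemma psum_zero {m : ℕ} (a : Fin m → ℤ × ℤ) : psum a 0 = 0 := by
  simp [psum]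

lemma psum_succ {m : ℕ} (a : Fin m → ℤ × ℤ) (k : ℕ) (hk : k < m) :
    psum a (k + 1) = psum a k + a ⟨k, hk⟩ := by
  unfold psum
  have step : (∑ i : Fin m, if (i : ℕ) < k + 1 then a i else 0)
      = ∑ i : Fin m, ((if (i : ℕ) < k then a i else 0) + (if i = ⟨k, hk⟩ then a i else 0)) := by
    refine Finset.sum_congr rfl fun i _ => ?_
    rcases lt_trichotomy (i : ℕ) k with h | h | h
    · rw [if_pos (by omega), if_pos h, if_neg (by simp [Fin.ext_iff]; omega), add_zero]
    · have hik : i = ⟨k, hk⟩ := Fin.ext h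
      subst hik
      rw [if_pos (by omega), if_neg (by omega), if_pos rfl, zero_add]
    · rw [if_neg (by omega), if_neg (by omega),
        if_neg (by simp [Fin.ext_iff]; omega), add_zero]
  rw [step, Finset.sum_add_distrib, Finset.sum_ite_eq' Finset.univ (⟨k, hk⟩ : Fin m) a,
    if_pos (Finset.mem_univ _)]

lemma psum_cons {m : ℕ} (e : ℤ × ℤ) (a : Fin m → ℤ × ℤ) (k : ℕ) :
    psum (Fin.cons e a) (k + 1) = e + psum a k := by
  unfold psum
  rw [Fin.sum_univ_succ]
  simp only [Fin.cons_zero, Fin.cons_succ, Fin.val_zero, Fin.val_succ]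
  rw [if_pos (by omega)]
  congr 1
  refine Finset.sum_congr rfl fun i _ => ?_
  by_cases h : (i : ℕ) < k
  · rw [if_pos (by omega), if_pos h]
  · rw [if_neg (by omega), if_neg h]

lemma psum_one {m : ℕ} (a : Fin (m + 1) → ℤ × ℤ) : psum a 1 = a 0 := by
  have h := psum_succ a 0 (by omega)
  rw [psum_zero] at h
  simpa using h

lemma good_one_iff (n : ℕ) (y : ℤ × ℤ) (a : Fin 1 → ℤ × ℤ) :
    Good n y a ↔ a 0 = -y := by
  constructor
  · rintro ⟨-, h2⟩
    rw [psum_one] at h2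
    exact eq_neg_of_add_eq_zero_right h2
  · intro h
    refine ⟨fun k hk1 hk2 => absurd hk2 (by omega), ?_⟩
    rw [psum_one, h]
    abel

lemma wt_one (a : Fin 1 → ℤ × ℤ) : wt a = stepDist {a 0} := by
  simp [wt]

lemma wt_cons {m : ℕ} (e : ℤ × ℤ) (a : Fin m → ℤ × ℤ) :
    wt (Fin.cons e a) = stepDist {e} * wt a := by
  simp [wt, Fin.prod_univ_succ]

lemma Pm_one (n : ℕ) (y : ℤ × ℤ) :
    Pm n y 1 = 4⁻¹ * ∑ e ∈ V, (if y + e = 0 then 1 else 0) := by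
  unfold Pm
  rw [← Equiv.tsum_eq (Equiv.funUnique (Fin 1) (ℤ × ℤ)).symm]
  have h1 : ∀ e : ℤ × ℤ,
      (if Good n y ((Equiv.funUnique (Fin 1) (ℤ × ℤ)).symm e) then
        wt ((Equiv.funUnique (Fin 1) (ℤ × ℤ)).symm e) else 0)
      = stepDist {e} * (if y + e = 0 then 1 else 0) := by
    intro e
    have he : ((Equiv.funUnique (Fin 1) (ℤ × ℤ)).symm e) = fun _ => e := rfl
    rw [he]
    have hg : Good n y (fun _ : Fin 1 => e) ↔ y + e = 0 := by
      rw [good_one_iff]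
      constructor
      · intro h; rw [h]; abel
      · intro h; exact eq_neg_of_add_eq_zero_right h
    by_cases h : y + e = 0
    · rw [if_pos (hg.mpr h), if_pos h, mul_one, wt_one]
    · rw [if_neg (fun hh => h (hg.mp hh)), if_neg h, mul_zero]
  rw [tsum_congr h1, tsum_stepDist_mul]

lemma good_cons_iff (n : ℕ) (y : ℤ × ℤ) {m : ℕ} (e : ℤ × ℤ) (a : Fin (m + 1) → ℤ × ℤ) :
    Good n y (Fin.cons e a : Fin (m + 2) → ℤ × ℤ) ↔ (ann n (y + e) ∧ Good n (y + e) a) := by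
  constructor
  · rintro ⟨h1, h2⟩
    have he : ann n (y + e) := by
      have := h1 1 (by omega) (by omega)
      rwa [psum_one, Fin.cons_zero] at this
    refine ⟨he, ⟨fun k hk1 hk2 => ?_, ?_⟩⟩
    · have := h1 (k + 1) (by omega) (by omega)
      rwa [psum_cons, ← add_assoc] at this
    · have := h2
      rw [psum_cons, ← add_assoc] at this
      exact this
  · rintro ⟨he, h1, h2⟩
    constructor
    · intro k hk1 hk2
      rcases Nat.exists_eq_add_of_lt hk1 with ⟨j, hj⟩
      subst hj
      simp only [zero_add] at *
      rw [psum_cons, ← add_assoc]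
      rcases Nat.eq_zero_or_pos j with hj0 | hj0
      · subst hj0; rwa [psum_zero, add_zero]
      · exact h1 j hj0 (by omega)
    · rw [show psum (Fin.cons e a : Fin (m + 2) → ℤ × ℤ) (m + 2)
          = e + psum a (m + 1) from psum_cons e a (m + 1), ← add_assoc]
      exact h2

lemma Pm_succ (n : ℕ) (y : ℤ × ℤ) (m : ℕ) :
    Pm n y (m + 2) = 4⁻¹ * ∑ e ∈ V, (if ann n (y + e) then Pm n (y + e) (m + 1) else 0) := by
  unfold Pm
  rw [← Equiv.tsum_eq (Fin.consEquiv (fun _ : Fin (m + 2) => ℤ × ℤ))]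
  have h1 : ∀ p : (ℤ × ℤ) × (Fin (m + 1) → ℤ × ℤ),
      (if Good n y ((Fin.consEquiv (fun _ : Fin (m + 2) => ℤ × ℤ)) p) then
        wt ((Fin.consEquiv (fun _ : Fin (m + 2) => ℤ × ℤ)) p) else 0)
      = stepDist {p.1} * (if (ann n (y + p.1) ∧ Good n (y + p.1) p.2) then wt p.2 else 0) := by
    rintro ⟨e, a⟩
    have he : ((Fin.consEquiv (fun _ : Fin (m + 2) => ℤ × ℤ)) (e, a)) = Fin.cons e a := rfl
    rw [he]
    by_cases h : ann n (y + e) ∧ Good n (y + e) a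
    · rw [if_pos ((good_cons_iff n y e a).mpr h), if_pos h, wt_cons]
    · rw [if_neg (fun hh => h ((good_cons_iff n y e a).mp hh)), if_neg h, mul_zero]
  rw [tsum_congr h1, ENNReal.tsum_prod']
  have h2 : ∀ e : ℤ × ℤ,
      (∑' a : Fin (m + 1) → ℤ × ℤ,
        stepDist {e} * (if (ann n (y + e) ∧ Good n (y + e) a) then wt a else 0))
      = stepDist {e} * (if ann n (y + e) then Pm n (y + e) (m + 1) else 0) := by
    intro e
    rw [ENNReal.tsum_mul_left]
    congr 1
    by_cases h : ann n (y + e)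
    · rw [if_pos h]
      unfold Pm
      exact tsum_congr fun a => by
        by_cases hg : Good n (y + e) a
        · rw [if_pos ⟨h, hg⟩, if_pos hg]
        · rw [if_neg (fun hh => hg hh.2), if_neg hg]
    · rw [if_neg h, ENNReal.tsum_eq_zero.mpr fun a => by rw [if_neg (fun hh => h hh.1)]]
  rw [tsum_congr h2, tsum_stepDist_mul]
  rfl

lemma Mh_rec (n : ℕ) (y : ℤ × ℤ) :
    Mh n y = 4⁻¹ * ∑ e ∈ V,
      (if y + e = 0 then 1 else if ann n (y + e) then Mh n (y + e) else 0) := by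
  have h0 : Mh n y = Pm n y 1 + ∑' m, Pm n y (m + 2) := by
    unfold Mh
    rw [tsum_eq_zero_add' ENNReal.summable]
  rw [h0, Pm_one, tsum_congr (fun m => Pm_succ n y m)]
  rw [ENNReal.tsum_mul_left]
  have hswap : (∑' m, ∑ e ∈ V, (if ann n (y + e) then Pm n (y + e) (m + 1) else 0))
      = ∑ e ∈ V, (if ann n (y + e) then Mh n (y + e) else 0) := by
    rw [Summable.tsum_finsetSum (fun e _ => ENNReal.summable)]
    refine Finset.sum_congr rfl fun e _ => ?_
    by_cases h : ann n (y + e)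
    · simp only [if_pos h]; rfl
    · simp only [if_neg h, tsum_zero]
  rw [hswap, ← mul_add, ← Finset.sum_add_distrib]
  congr 1
  refine Finset.sum_congr rfl fun e _ => ?_
  by_cases h0' : y + e = 0
  · have : ¬ ann n (y + e) := fun h => h.1 h0'
    rw [if_pos h0', if_pos h0', if_neg this, add_zero]
  · rw [if_neg h0', if_neg h0', zero_add]

section Meas

variable {Ω : Type} [MeasurableSpace Ω] (μ : Measure Ω) (X : ℕ → Ω → ℤ × ℤ)

/-- the cylinder set -/
def Cyl (m : ℕ) (a : Fin m → ℤ × ℤ) : Set Ω := ⋂ i : Fin m, (X (i + 1)) ⁻¹' {a i}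

lemma measurable_walkFrom (hX : ∀ i, Measurable (X i)) (y : ℤ × ℤ) (k : ℕ) :
    Measurable (walkFrom X y k) := by
  unfold walkFrom
  exact (Finset.measurable_sum _ (fun i _ => hX i)).const_add y

lemma walk_on_cyl (y : ℤ × ℤ) {m : ℕ} (a : Fin m → ℤ × ℤ) (ω : Ω)
    (hω : ω ∈ Cyl X m a) (k : ℕ) (hk : k ≤ m) :
    walkFrom X y k ω = y + psum a k := by
  have hX : ∀ i : Fin m, X (i + 1) ω = a i := by
    intro i
    have := Set.mem_iInter.mp hω i
    simpa using this
  unfold walkFrom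
  congr 1
  induction k with
  | zero => simp [psum]
  | succ k ih =>
    have hk' : k < m := by omega
    rw [Finset.sum_Icc_succ_top (by omega : 1 ≤ k + 1), ih (by omega)]
    have hpsum : psum a (k + 1) = psum a k + a ⟨k, hk'⟩ := by
      unfold psum
      have step : (∑ i : Fin m, if (i : ℕ) < k + 1 then a i else 0)
          = ∑ i : Fin m, ((if (i : ℕ) < k then a i else 0) + (if i = ⟨k, hk'⟩ then a i else 0)) := by
        refine Finset.sum_congr rfl fun i _ => ?_
        rcases lt_trichotomy (i : ℕ) k with h | h | h
        · rw [if_pos (by omega), if_pos h, if_neg (by simp [Fin.ext_iff]; omega), add_zero]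
        · have hik : i = ⟨k, hk'⟩ := Fin.ext h
          subst hik
          rw [if_pos (by omega), if_neg (by omega), if_pos rfl, zero_add]
        · rw [if_neg (by omega), if_neg (by omega),
            if_neg (by simp [Fin.ext_iff]; omega), add_zero]
      rw [step, Finset.sum_add_distrib, Finset.sum_ite_eq' Finset.univ (⟨k, hk'⟩ : Fin m) a,
        if_pos (Finset.mem_univ _)]
    rw [hpsum]
    have := hX ⟨k, hk'⟩
    simp only [Fin.val_mk] at this
    rw [this]

lemma cyl_measure (hX : ∀ i, Measurable (X i)) (hmap : ∀ i, μ.map (X i) = stepDist)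
    (hind : iIndepFun X μ) (m : ℕ) (a : Fin m → ℤ × ℤ) :
    μ (Cyl X m a) = wt a := by
  classical
  set b : ℕ → Set (ℤ × ℤ) := fun i => if h : i - 1 < m ∧ 1 ≤ i then {a ⟨i - 1, h.1⟩} else Set.univ
    with hb
  have hcyl : Cyl X m a = ⋂ i ∈ Finset.Icc 1 m, (X i) ⁻¹' (b i) := by
    ext ω
    simp only [Cyl, Set.mem_iInter, Finset.mem_Icc]
    constructor
    · intro h i hi
      have hlt : i - 1 < m ∧ 1 ≤ i := ⟨by omega, hi.1⟩
      have : X i ω = a ⟨i - 1, hlt.1⟩ := by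
        have := h ⟨i - 1, hlt.1⟩
        simp only [Set.mem_preimage, Set.mem_singleton_iff] at this
        rwa [show (i - 1 : ℕ) + 1 = i by omega] at this
      simp [hb, hlt, this]
    · intro h i
      have hi : (1 : ℕ) ≤ (i : ℕ) + 1 ∧ (i : ℕ) + 1 ≤ m := ⟨by omega, by omega⟩
      have := h ((i : ℕ) + 1) hi
      have hlt : ((i : ℕ) + 1) - 1 < m ∧ 1 ≤ (i : ℕ) + 1 := ⟨by simpa using i.2, by omega⟩
      rw [hb] at this
      simp only [dif_pos hlt, Set.mem_preimage, Set.mem_singleton_iff] at this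
      have hia : (⟨((i : ℕ) + 1) - 1, hlt.1⟩ : Fin m) = i := Fin.ext (by simp)
      rw [hia] at this
      simpa [Set.mem_preimage, Set.mem_singleton_iff] using this
  rw [hcyl]
  rw [hind.measure_inter_preimage_eq_mul (Finset.Icc 1 m) (fun i _ => measurableSet_zz _)]
  have hfac : ∀ i ∈ Finset.Icc 1 m, μ (X i ⁻¹' (b i)) = stepDist (b i) := by
    intro i _
    rw [← hmap i, Measure.map_apply (hX i) (measurableSet_zz _)]
  rw [Finset.prod_congr rfl hfac]
  unfold wt
  have hre : ∀ (M : ℕ) (g : ℕ → ENNReal), ∏ i ∈ Finset.Icc 1 M, g i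
      = ∏ i : Fin M, g ((i : ℕ) + 1) := by
    intro M g
    induction M with
    | zero => simp
    | succ M ih =>
      rw [Finset.prod_Icc_succ_top (by omega : 1 ≤ M + 1), ih, Fin.prod_univ_castSucc]
      simp
  rw [hre m (fun i => stepDist (b i))]
  refine Finset.prod_congr rfl fun i _ => ?_
  have hlt : ((i : ℕ) + 1) - 1 < m ∧ 1 ≤ (i : ℕ) + 1 := ⟨by simpa using i.2, by omega⟩
  rw [hb]
  simp only [dif_pos hlt]
  have hia : (⟨((i : ℕ) + 1) - 1, hlt.1⟩ : Fin m) = i := Fin.ext (by simp)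
  rw [hia]

end Meas

section Meas2

variable {Ω : Type} [MeasurableSpace Ω] (μ : Measure Ω) (X : ℕ → Ω → ℤ × ℤ)

/-- the event: stays in the annulus strictly before time `m`, at the origin at time `m`. -/
def Ev (y : ℤ × ℤ) (n m : ℕ) : Set Ω :=
  {ω | (∀ k, 0 < k → k < m → ann n (walkFrom X y k ω)) ∧ walkFrom X y m ω = 0}

lemma Ev_measurable (hX : ∀ i, Measurable (X i)) (y : ℤ × ℤ) (n m : ℕ) :
    MeasurableSet (Ev X y n m) := by
  have h1 : Ev X y n m =
      (⋂ k ∈ Finset.Ico 1 m, (walkFrom X y k) ⁻¹' {z | ann n z}) ∩ (walkFrom X y m) ⁻¹' {0} := by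
    ext ω
    simp only [Ev, Set.mem_inter_iff, Set.mem_iInter, Set.mem_preimage, Set.mem_setOf_eq,
      Finset.mem_Ico, Set.mem_singleton_iff]
    constructor
    · rintro ⟨h1, h2⟩; exact ⟨fun k hk => h1 k hk.1 hk.2, h2⟩
    · rintro ⟨h1, h2⟩; exact ⟨fun k hk1 hk2 => h1 k ⟨hk1, hk2⟩, h2⟩
  rw [h1]
  exact MeasurableSet.inter
    (MeasurableSet.biInter (Set.to_countable _)
      (fun k _ => measurable_walkFrom X hX y k (measurableSet_zz _)))
    (measurable_walkFrom X hX y m (measurableSet_zz _))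

lemma Ev_measure (hX : ∀ i, Measurable (X i)) (hmap : ∀ i, μ.map (X i) = stepDist)
    (hind : iIndepFun X μ) (y : ℤ × ℤ) (n m : ℕ) :
    μ (Ev X y n m) = Pm n y m := by
  classical
  have hpart : Ev X y n m = ⋃ a : Fin m → ℤ × ℤ, (Ev X y n m ∩ Cyl X m a) := by
    ext ω
    simp only [Set.mem_iUnion, Set.mem_inter_iff]
    constructor
    · intro h
      exact ⟨fun i => X ((i : ℕ) + 1) ω, h, by simp [Cyl]⟩
    · rintro ⟨a, h, -⟩; exact h
  have hdisj : Pairwise (Function.onFun Disjoint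
      fun a : Fin m → ℤ × ℤ => Ev X y n m ∩ Cyl X m a) := by
    intro a a' haa'
    refine Set.disjoint_left.mpr ?_
    rintro ω ⟨-, h1⟩ ⟨-, h2⟩
    apply haa'
    funext i
    have e1 := Set.mem_iInter.mp h1 i
    have e2 := Set.mem_iInter.mp h2 i
    simp only [Set.mem_preimage, Set.mem_singleton_iff] at e1 e2
    rw [← e1, ← e2]
  have hmeas : ∀ a : Fin m → ℤ × ℤ, MeasurableSet (Ev X y n m ∩ Cyl X m a) := by
    intro a
    exact (Ev_measurable X hX y n m).inter
      (MeasurableSet.iInter fun i => hX _ (measurableSet_zz _))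
  rw [hpart, measure_iUnion hdisj hmeas]
  unfold Pm
  refine tsum_congr fun a => ?_
  by_cases hg : Good n y a
  · rw [if_pos hg]
    have : Ev X y n m ∩ Cyl X m a = Cyl X m a := by
      refine Set.inter_eq_self_of_subset_right fun ω hω => ?_
      refine ⟨fun k hk1 hk2 => ?_, ?_⟩
      · rw [walk_on_cyl X y a ω hω k (by omega)]
        exact hg.1 k hk1 hk2
      · rw [walk_on_cyl X y a ω hω m le_rfl]
        exact hg.2
    rw [this]
    exact cyl_measure μ X hX hmap hind m a
  · rw [if_neg hg]
    have : Ev X y n m ∩ Cyl X m a = ∅ := by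
      refine Set.eq_empty_iff_forall_notMem.mpr fun ω hω => ?_
      rcases hω with ⟨⟨h1, h2⟩, hcyl⟩
      apply hg
      constructor
      · intro k hk1 hk2
        rw [← walk_on_cyl X y a ω hcyl k (by omega)]
        exact h1 k hk1 hk2
      · rw [← walk_on_cyl X y a ω hcyl m le_rfl]
        exact h2
    rw [this, measure_empty]

lemma hit_eq_iUnion (y : ℤ × ℤ) (n : ℕ) (hy : y ≠ 0) :
    {ω | walkFrom X y (hitTime X y n ω) ω = 0} = ⋃ m : ℕ, Ev X y n (m + 1) := by
  ext ω
  simp only [Set.mem_setOf_eq, Set.mem_iUnion]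
  constructor
  · intro h
    set s := {m : ℕ | 0 < m ∧ (walkFrom X y m ω = 0 ∨ (n : ℝ) ≤ znorm (walkFrom X y m ω))} with hs
    have hsne : s.Nonempty := by
      by_contra hne
      rw [Set.not_nonempty_iff_eq_empty] at hne
      have hteq : hitTime X y n ω = sInf s := rfl
      have : hitTime X y n ω = 0 := by rw [hteq, hne, Nat.sInf_empty]
      rw [this] at h
      have h0 : walkFrom X y 0 ω = y := by
        show y + ∑ i ∈ Finset.Icc 1 0, X i ω = y
        rw [Finset.Icc_eq_empty (by omega), Finset.sum_empty, add_zero]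
      rw [h0] at h
      exact hy h
    have hmem : hitTime X y n ω ∈ s := Nat.sInf_mem hsne
    have hpos : 0 < hitTime X y n ω := hmem.1
    obtain ⟨m, hm⟩ : ∃ m, hitTime X y n ω = m + 1 := ⟨hitTime X y n ω - 1, by omega⟩
    refine ⟨m, fun k hk1 hk2 => ?_, by rwa [← hm]⟩
    have hknot : k ∉ s := by
      intro hks
      have h5 : sInf s ≤ k := Nat.sInf_le hks
      have hteq : hitTime X y n ω = sInf s := rfl
      omega
    rw [hs, Set.mem_setOf_eq] at hknot
    push_neg at hknot
    have h2 := hknot hk1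
    rw [ann_iff]
    constructor
    · rw [znorm_pos_iff]; exact h2.1
    · exact h2.2
  · rintro ⟨m, h1, h2⟩
    have hmem : (m + 1) ∈ {m' : ℕ | 0 < m' ∧
        (walkFrom X y m' ω = 0 ∨ (n : ℝ) ≤ znorm (walkFrom X y m' ω))} :=
      ⟨by omega, Or.inl h2⟩
    have hle : hitTime X y n ω ≤ m + 1 := Nat.sInf_le hmem
    have hge : ¬ (hitTime X y n ω < m + 1) := by
      intro hlt
      have hmem2 := Nat.sInf_mem (Set.nonempty_of_mem hmem)
      rw [hitTime] at hlt
      have h3 := hmem2.1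
      have h4 := h1 _ h3 hlt
      rw [ann_iff] at h4
      rcases hmem2.2 with h5 | h5
      · have h6 := h4.1
        rw [h5] at h6
        exact (znorm_pos_iff 0).mp h6 rfl
      · exact absurd h5 (not_le.mpr h4.2)
    have : hitTime X y n ω = m + 1 := by omega
    rw [this]
    exact h2

lemma hit_measure (hX : ∀ i, Measurable (X i)) (hmap : ∀ i, μ.map (X i) = stepDist)
    (hind : iIndepFun X μ) (y : ℤ × ℤ) (n : ℕ) (hy : y ≠ 0) :
    μ {ω | walkFrom X y (hitTime X y n ω) ω = 0} = Mh n y := by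
  rw [hit_eq_iUnion X y n hy]
  have hdisj : Pairwise (Function.onFun Disjoint fun m : ℕ => Ev X y n (m + 1)) := by
    intro m m' hmm'
    rcases Nat.lt_or_ge m m' with h | h
    · refine Set.disjoint_left.mpr ?_
      rintro ω ⟨-, h2⟩ ⟨h3, -⟩
      have := h3 (m + 1) (by omega) (by omega)
      exact this.1 h2
    · have h' : m' < m := by omega
      refine Set.disjoint_left.mpr ?_
      rintro ω ⟨h3, -⟩ ⟨-, h2⟩
      have := h3 (m' + 1) (by omega) (by omega)
      exact this.1 h2
  rw [measure_iUnion hdisj (fun m => Ev_measurable X hX y n (m + 1))]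
  unfold Mh
  exact tsum_congr fun m => Ev_measure μ X hX hmap hind y n (m + 1)

end Meas2

lemma keyPoly (s w : ℝ) (hs : 2 ≤ s) (hw : 0 ≤ w) (hws : 4 * w ≤ s ^ 2) :
    16 * ((s ^ 2 - 1) ^ 2 + 16 * w) ≤
      s * ((s ^ 2 - 1) ^ 2 + 16 * w) - s ^ 5 + 16 * s * (s + 1) * (s ^ 2 + 1) := by
  rcases le_total s 16 with h | h
  · nlinarith [mul_nonneg (sub_nonneg.mpr h) (sub_nonneg.mpr hws), sq_nonneg s, sq_nonneg (s - 2)]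
  · nlinarith [mul_nonneg (sub_nonneg.mpr h) hw, sq_nonneg s]

lemma keyPoly2 (s N : ℝ) (hs : 2 ≤ s) (hN1 : (s ^ 2 - 1) ^ 2 ≤ N) (hN2 : N ≤ (s ^ 2 + 1) ^ 2) :
    N ^ 2 + 12 * s ^ 3 * N - s ^ 4 * N - 12 * s ^ 4 * (s + 1) * (s ^ 2 + 1) ≤ 0 := by
  have h1 : 0 ≤ ((s ^ 2 + 1) ^ 2 - N) * (N + (s ^ 2 + 1) ^ 2 + 12 * s ^ 3 - s ^ 4) := by
    apply mul_nonneg (by linarith)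
    nlinarith [sq_nonneg s, pow_pos (by linarith : (0:ℝ) < s) 3]
  have h2 : 0 ≤ (s ^ 2 + 1) * (10 * s ^ 4 - 12 * s ^ 3 - 3 * s ^ 2 - 1) := by
    apply mul_nonneg (by nlinarith [sq_nonneg s])
    nlinarith [pow_pos (by linarith : (0:ℝ) < s) 3, sq_nonneg s, sq_nonneg (s - 2)]
  nlinarith [h1, h2]

noncomputable def TT (n : ℕ) : ℝ := Real.log ((n : ℝ) ^ 2)

noncomputable def Phi (n : ℕ) (z : ℤ × ℤ) : ℝ :=
  if z = 0 then 1
  else (TT n + 15 - Real.log ((sqn z : ℤ) : ℝ) - 4 / ((sqn z : ℤ) : ℝ)) / TT n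

noncomputable def Psi (n : ℕ) (z : ℤ × ℤ) : ℝ :=
  if z = 0 then 1
  else (TT n - Real.log ((sqn z : ℤ) : ℝ) + 3 / ((sqn z : ℤ) : ℝ) - 12) / TT n

lemma TT_pos {n : ℕ} (hn : 2 ≤ n) : 0 < TT n := by
  apply Real.log_pos
  have : (2 : ℝ) ≤ (n : ℝ) := by exact_mod_cast hn
  nlinarith

lemma sumV (f : ℤ × ℤ → ℝ) :
    ∑ e ∈ V, f e = f (1, 0) + f (-1, 0) + f (0, 1) + f (0, -1) := by
  rw [show V = {(1, 0), (-1, 0), (0, 1), (0, -1)} from rfl]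
  rw [Finset.sum_insert (by decide), Finset.sum_insert (by decide),
    Finset.sum_insert (by decide), Finset.sum_singleton]
  ring

lemma sqn_eq_one_cases {y : ℤ × ℤ} (h : sqn y = 1) :
    y = (1, 0) ∨ y = (-1, 0) ∨ y = (0, 1) ∨ y = (0, -1) := by
  obtain ⟨α, β⟩ := y
  simp only [sqn] at h
  have h1 : -1 ≤ α ∧ α ≤ 1 := by constructor <;> nlinarith [sq_nonneg β]
  have h2 : -1 ≤ β ∧ β ≤ 1 := by constructor <;> nlinarith [sq_nonneg α]
  obtain ⟨h1a, h1b⟩ := h1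
  obtain ⟨h2a, h2b⟩ := h2
  interval_cases α <;> interval_cases β <;> simp_all [Prod.ext_iff] <;> omega

lemma sqn_add (y e : ℤ × ℤ) :
    sqn (y + e) = sqn y + 2 * (y.1 * e.1 + y.2 * e.2) + sqn e := by
  simp only [sqn, Prod.fst_add, Prod.snd_add]
  ring

set_option maxHeartbeats 1000000 in
/-- The main real-variable inequality: upper barrier superharmonicity for `s ≥ 2`. -/
lemma core_upper (T : ℝ) (hT : 0 < T) (c1 c2 s a b c d : ℝ)
    (hsum : s = c1 ^ 2 + c2 ^ 2) (hs : 2 ≤ s)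
    (h1 : a = s + 2 * c1 + 1) (h2 : b = s - 2 * c1 + 1)
    (h3 : c = s + 2 * c2 + 1) (h4 : d = s - 2 * c2 + 1)
    (ha : 1 ≤ a) (hb : 1 ≤ b) (hc : 1 ≤ c) (hd : 1 ≤ d) :
    (T + 15 - Real.log a - 4 / a) / T + (T + 15 - Real.log b - 4 / b) / T +
      (T + 15 - Real.log c - 4 / c) / T + (T + 15 - Real.log d - 4 / d) / T ≤
      4 * ((T + 15 - Real.log s - 4 / s) / T) := by
  have hs0 : (0 : ℝ) < s := by linarith
  have ha0 : (0 : ℝ) < a := by linarith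
  have hb0 : (0 : ℝ) < b := by linarith
  have hc0 : (0 : ℝ) < c := by linarith
  have hd0 : (0 : ℝ) < d := by linarith
  have key : 4 * Real.log s + 16 / s ≤
      Real.log a + Real.log b + Real.log c + Real.log d + (4/a + 4/b + 4/c + 4/d) := by
    have hlog : Real.log a + Real.log b + Real.log c + Real.log d
        = Real.log (a * b * c * d) := by
      rw [Real.log_mul (by positivity) (by positivity),
        Real.log_mul (by positivity) (by positivity),
        Real.log_mul (by positivity) (by positivity)]
    have hlb : 4 * Real.log s + 1 - s ^ 4 / (a * b * c * d) ≤ Real.log (a * b * c * d) := by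
      have h := Real.log_le_sub_one_of_pos (show 0 < s ^ 4 / (a * b * c * d) by positivity)
      rw [Real.log_div (by positivity) (by positivity), Real.log_pow] at h
      push_cast at h
      linarith
    have hrat : 16 / s ≤ 1 - s ^ 4 / (a * b * c * d) + (4/a + 4/b + 4/c + 4/d) := by
      have hfrac : 1 - s ^ 4 / (a * b * c * d) + (4/a + 4/b + 4/c + 4/d) - 16 / s
          = (s * (a * b * c * d) - s ^ 5
              + 4 * s * (b * c * d + a * c * d + a * b * d + a * b * c)
              - 16 * (a * b * c * d)) / (s * (a * b * c * d)) := by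
        field_simp
      rw [← sub_nonneg, hfrac]
      apply div_nonneg _ (by positivity)
      have htri : b * c * d + a * c * d + a * b * d + a * b * c
          = 4 * (s + 1) * (s ^ 2 + 1) := by
        rw [h1, h2, h3, h4, hsum]; ring
      have hNval : a * b * c * d = (s ^ 2 - 1) ^ 2 + 16 * (c1 ^ 2 * c2 ^ 2) := by
        rw [h1, h2, h3, h4, hsum]; ring
      have kp := keyPoly s (c1 ^ 2 * c2 ^ 2) hs (by positivity)
        (by rw [hsum]; nlinarith [sq_nonneg (c1 ^ 2 - c2 ^ 2)])
      rw [htri, hNval]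
      linarith [kp]
    linarith [hlog, hlb, hrat]
  have hcomb : (T + 15 - Real.log a - 4 / a) / T + (T + 15 - Real.log b - 4 / b) / T +
      (T + 15 - Real.log c - 4 / c) / T + (T + 15 - Real.log d - 4 / d) / T
      = ((T + 15 - Real.log a - 4 / a) + (T + 15 - Real.log b - 4 / b) +
        (T + 15 - Real.log c - 4 / c) + (T + 15 - Real.log d - 4 / d)) / T := by
    rw [← add_div, ← add_div, ← add_div]
  rw [hcomb, ← mul_div_assoc, div_le_div_iff_of_pos_right hT]
  have h16 : 16 / s = 4 * (4 / s) := by ring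
  linarith [key]

set_option maxHeartbeats 1000000 in
/-- lower barrier subharmonicity for `s ≥ 2`. -/
lemma core_lower (T : ℝ) (hT : 0 < T) (c1 c2 s a b c d : ℝ)
    (hsum : s = c1 ^ 2 + c2 ^ 2) (hs : 2 ≤ s)
    (h1 : a = s + 2 * c1 + 1) (h2 : b = s - 2 * c1 + 1)
    (h3 : c = s + 2 * c2 + 1) (h4 : d = s - 2 * c2 + 1)
    (ha : 1 ≤ a) (hb : 1 ≤ b) (hc : 1 ≤ c) (hd : 1 ≤ d) :
    4 * ((T - Real.log s + 3 / s - 12) / T) ≤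
      (T - Real.log a + 3 / a - 12) / T + (T - Real.log b + 3 / b - 12) / T +
      (T - Real.log c + 3 / c - 12) / T + (T - Real.log d + 3 / d - 12) / T := by
  have hs0 : (0 : ℝ) < s := by linarith
  have ha0 : (0 : ℝ) < a := by linarith
  have hb0 : (0 : ℝ) < b := by linarith
  have hc0 : (0 : ℝ) < c := by linarith
  have hd0 : (0 : ℝ) < d := by linarith
  have key : Real.log a + Real.log b + Real.log c + Real.log d - 4 * Real.log s ≤
      (3/a + 3/b + 3/c + 3/d) - 12 / s := by
    have hlog : Real.log a + Real.log b + Real.log c + Real.log d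
        = Real.log (a * b * c * d) := by
      rw [Real.log_mul (by positivity) (by positivity),
        Real.log_mul (by positivity) (by positivity),
        Real.log_mul (by positivity) (by positivity)]
    have hub : Real.log (a * b * c * d) - 4 * Real.log s
        ≤ (a * b * c * d) / s ^ 4 - 1 := by
      have h := Real.log_le_sub_one_of_pos (show 0 < (a * b * c * d) / s ^ 4 by positivity)
      rw [Real.log_div (by positivity) (by positivity), Real.log_pow] at h
      push_cast at h
      linarith
    have hrat : (a * b * c * d) / s ^ 4 - 1 ≤ (3/a + 3/b + 3/c + 3/d) - 12 / s := by
      have hfrac : (3/a + 3/b + 3/c + 3/d) - 12 / s - ((a * b * c * d) / s ^ 4 - 1)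
          = (3 * s ^ 4 * (b * c * d + a * c * d + a * b * d + a * b * c)
              - 12 * s ^ 3 * (a * b * c * d)
              - (a * b * c * d) ^ 2 + s ^ 4 * (a * b * c * d))
            / (s ^ 4 * (a * b * c * d)) := by
        field_simp
        ring
      rw [← sub_nonneg, hfrac]
      apply div_nonneg _ (by positivity)
      have htri : b * c * d + a * c * d + a * b * d + a * b * c
          = 4 * (s + 1) * (s ^ 2 + 1) := by
        rw [h1, h2, h3, h4, hsum]; ring
      have hNval : a * b * c * d = (s ^ 2 - 1) ^ 2 + 16 * (c1 ^ 2 * c2 ^ 2) := by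
        rw [h1, h2, h3, h4, hsum]; ring
      have hN1 : (s ^ 2 - 1) ^ 2 ≤ (s ^ 2 - 1) ^ 2 + 16 * (c1 ^ 2 * c2 ^ 2) := by
        nlinarith [sq_nonneg (c1 * c2)]
      have hN2 : (s ^ 2 - 1) ^ 2 + 16 * (c1 ^ 2 * c2 ^ 2) ≤ (s ^ 2 + 1) ^ 2 := by
        rw [hsum]; nlinarith [sq_nonneg (c1 ^ 2 - c2 ^ 2)]
      have kp := keyPoly2 s ((s ^ 2 - 1) ^ 2 + 16 * (c1 ^ 2 * c2 ^ 2)) hs hN1 hN2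
      rw [htri, hNval]
      linarith [kp]
    linarith [hlog, hub, hrat]
  have hcomb : (T - Real.log a + 3 / a - 12) / T + (T - Real.log b + 3 / b - 12) / T +
      (T - Real.log c + 3 / c - 12) / T + (T - Real.log d + 3 / d - 12) / T
      = ((T - Real.log a + 3 / a - 12) + (T - Real.log b + 3 / b - 12) +
        (T - Real.log c + 3 / c - 12) + (T - Real.log d + 3 / d - 12)) / T := by
    rw [← add_div, ← add_div, ← add_div]
  rw [hcomb, ← mul_div_assoc, div_le_div_iff_of_pos_right hT]
  have h12 : 12 / s = 4 * (3 / s) := by ring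
  linarith [key]

lemma log_two_lt : Real.log 2 < 0.7 := lt_trans Real.log_two_lt_d9 (by norm_num)

lemma ring1_upper (n : ℕ) (hn : 2 ≤ n) {y w a b : ℤ × ℤ} (hy : sqn y = 1) (hw : sqn w = 4)
    (ha : sqn a = 2) (hb : sqn b = 2) (hy0 : y ≠ 0) (hw0 : w ≠ 0) (ha0 : a ≠ 0) (hb0 : b ≠ 0) :
    Phi n w + Phi n a + Phi n b + 1 ≤ 4 * Phi n y := by
  have hT := TT_pos hn
  have hl2 : 0 ≤ Real.log 2 := Real.log_nonneg (by norm_num)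
  have hlog4 : Real.log (4 : ℝ) = 2 * Real.log 2 := by
    rw [show (4 : ℝ) = 2 ^ 2 by norm_num, Real.log_pow]
    push_cast; ring
  simp only [Phi, if_neg hy0, if_neg hw0, if_neg ha0, if_neg hb0, hy, hw, ha, hb]
  push_cast
  rw [← sub_nonneg]
  have hid : 4 * ((TT n + 15 - Real.log 1 - 4 / 1) / TT n) -
      ((TT n + 15 - Real.log 4 - 4 / 4) / TT n + (TT n + 15 - Real.log 2 - 4 / 2) / TT n +
        (TT n + 15 - Real.log 2 - 4 / 2) / TT n + 1)
      = (4 + 4 * Real.log 2) / TT n := by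
    rw [hlog4, Real.log_one]
    field_simp
    ring
  rw [hid]
  positivity

lemma ring1_lower (n : ℕ) (hn : 2 ≤ n) {y w a b : ℤ × ℤ} (hy : sqn y = 1) (hw : sqn w = 4)
    (ha : sqn a = 2) (hb : sqn b = 2) (hy0 : y ≠ 0) (hw0 : w ≠ 0) (ha0 : a ≠ 0) (hb0 : b ≠ 0) :
    4 * Psi n y ≤ Psi n w + Psi n a + Psi n b + 1 := by
  have hT := TT_pos hn
  have hl2 : 0 ≤ Real.log 2 := Real.log_nonneg (by norm_num)
  have hl2' : Real.log 2 < 0.7 := log_two_lt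
  have hlog4 : Real.log (4 : ℝ) = 2 * Real.log 2 := by
    rw [show (4 : ℝ) = 2 ^ 2 by norm_num, Real.log_pow]
    push_cast; ring
  simp only [Psi, if_neg hy0, if_neg hw0, if_neg ha0, if_neg hb0, hy, hw, ha, hb]
  push_cast
  rw [← sub_nonneg]
  have hid : ((TT n - Real.log 4 + 3 / 4 - 12) / TT n + (TT n - Real.log 2 + 3 / 2 - 12) / TT n +
        (TT n - Real.log 2 + 3 / 2 - 12) / TT n + 1) -
      4 * ((TT n - Real.log 1 + 3 / 1 - 12) / TT n)
      = (15 / 4 - 4 * Real.log 2) / TT n := by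
    rw [hlog4, Real.log_one]
    field_simp
    ring
  rw [hid]
  apply div_nonneg _ hT.le
  linarith

lemma nbr_ne {y : ℤ × ℤ} (hs2 : 1 < sqn y) (e : ℤ × ℤ) (he : sqn e = 1) :
    y + e ≠ 0 := by
  intro h
  have h2 : y = -e := eq_neg_of_add_eq_zero_left h
  have hne : sqn (-e) = sqn e := by
    simp only [sqn, Prod.fst_neg, Prod.snd_neg]
    ring
  have h3 : sqn y = 1 := by rw [h2, hne, he]
  omega

lemma sqn_cast' (z : ℤ × ℤ) : ((sqn z : ℤ) : ℝ) = (z.1 : ℝ) ^ 2 + (z.2 : ℝ) ^ 2 := by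
  simp only [sqn]; push_cast; ring

lemma SH_Phi (n : ℕ) (hn : 2 ≤ n) (y : ℤ × ℤ) (hy : ann n y) :
    ∑ e ∈ V, Phi n (y + e) ≤ 4 * Phi n y := by
  have hT := TT_pos hn
  have hy0 := hy.1
  have hy1 := one_le_sqn hy0
  rw [sumV]
  rcases eq_or_lt_of_le hy1 with hs1 | hs2
  · have h1 : sqn y = 1 := hs1.symm
    have h00 : ((0 : ℤ), (0 : ℤ)) = (0 : ℤ × ℤ) := rfl
    rcases sqn_eq_one_cases h1 with h | h | h | h <;> subst h
    · rw [show ((1,0) : ℤ × ℤ) + (1,0) = (2,0) by norm_num [Prod.ext_iff],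
        show ((1,0) : ℤ × ℤ) + (-1,0) = 0 by norm_num [Prod.ext_iff],
        show ((1,0) : ℤ × ℤ) + (0,1) = (1,1) by norm_num [Prod.ext_iff],
        show ((1,0) : ℤ × ℤ) + (0,-1) = (1,-1) by norm_num [Prod.ext_iff]]
      have key := ring1_upper n hn (y := (1,0)) (w := (2,0)) (a := (1,1)) (b := (1,-1))
        (by norm_num [sqn]) (by norm_num [sqn]) (by norm_num [sqn]) (by norm_num [sqn])
        (by norm_num [Prod.ext_iff]) (by norm_num [Prod.ext_iff])
        (by norm_num [Prod.ext_iff]) (by norm_num [Prod.ext_iff])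
      have hP0 : Phi n 0 = 1 := by simp [Phi]
      rw [hP0]
      linarith [key]
    · rw [show ((-1,0) : ℤ × ℤ) + (1,0) = 0 by norm_num [Prod.ext_iff],
        show ((-1,0) : ℤ × ℤ) + (-1,0) = (-2,0) by norm_num [Prod.ext_iff],
        show ((-1,0) : ℤ × ℤ) + (0,1) = (-1,1) by norm_num [Prod.ext_iff],
        show ((-1,0) : ℤ × ℤ) + (0,-1) = (-1,-1) by norm_num [Prod.ext_iff]]
      have key := ring1_upper n hn (y := (-1,0)) (w := (-2,0)) (a := (-1,1)) (b := (-1,-1))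
        (by norm_num [sqn]) (by norm_num [sqn]) (by norm_num [sqn]) (by norm_num [sqn])
        (by norm_num [Prod.ext_iff]) (by norm_num [Prod.ext_iff])
        (by norm_num [Prod.ext_iff]) (by norm_num [Prod.ext_iff])
      have hP0 : Phi n 0 = 1 := by simp [Phi]
      rw [hP0]
      linarith [key]
    · rw [show ((0,1) : ℤ × ℤ) + (1,0) = (1,1) by norm_num [Prod.ext_iff],
        show ((0,1) : ℤ × ℤ) + (-1,0) = (-1,1) by norm_num [Prod.ext_iff],
        show ((0,1) : ℤ × ℤ) + (0,1) = (0,2) by norm_num [Prod.ext_iff],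
        show ((0,1) : ℤ × ℤ) + (0,-1) = 0 by norm_num [Prod.ext_iff]]
      have key := ring1_upper n hn (y := (0,1)) (w := (0,2)) (a := (1,1)) (b := (-1,1))
        (by norm_num [sqn]) (by norm_num [sqn]) (by norm_num [sqn]) (by norm_num [sqn])
        (by norm_num [Prod.ext_iff]) (by norm_num [Prod.ext_iff])
        (by norm_num [Prod.ext_iff]) (by norm_num [Prod.ext_iff])
      have hP0 : Phi n 0 = 1 := by simp [Phi]
      rw [hP0]
      linarith [key]
    · rw [show ((0,-1) : ℤ × ℤ) + (1,0) = (1,-1) by norm_num [Prod.ext_iff],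
        show ((0,-1) : ℤ × ℤ) + (-1,0) = (-1,-1) by norm_num [Prod.ext_iff],
        show ((0,-1) : ℤ × ℤ) + (0,1) = 0 by norm_num [Prod.ext_iff],
        show ((0,-1) : ℤ × ℤ) + (0,-1) = (0,-2) by norm_num [Prod.ext_iff]]
      have key := ring1_upper n hn (y := (0,-1)) (w := (0,-2)) (a := (1,-1)) (b := (-1,-1))
        (by norm_num [sqn]) (by norm_num [sqn]) (by norm_num [sqn]) (by norm_num [sqn])
        (by norm_num [Prod.ext_iff]) (by norm_num [Prod.ext_iff])
        (by norm_num [Prod.ext_iff]) (by norm_num [Prod.ext_iff])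
      have hP0 : Phi n 0 = 1 := by simp [Phi]
      rw [hP0]
      linarith [key]
  · -- sqn y ≥ 2
    have hne1 : y + (1,0) ≠ 0 := nbr_ne hs2 _ (by norm_num [sqn])
    have hne2 : y + (-1,0) ≠ 0 := nbr_ne hs2 _ (by norm_num [sqn])
    have hne3 : y + (0,1) ≠ 0 := nbr_ne hs2 _ (by norm_num [sqn])
    have hne4 : y + (0,-1) ≠ 0 := nbr_ne hs2 _ (by norm_num [sqn])
    have hge1 := one_le_sqn hne1
    have hge2 := one_le_sqn hne2
    have hge3 := one_le_sqn hne3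
    have hge4 := one_le_sqn hne4
    have hv1 : ((sqn (y + (1,0)) : ℤ) : ℝ) = ((sqn y : ℤ) : ℝ) + 2 * (y.1 : ℝ) + 1 := by
      rw [sqn_add]; push_cast; norm_num [sqn]
    have hv2 : ((sqn (y + (-1,0)) : ℤ) : ℝ) = ((sqn y : ℤ) : ℝ) - 2 * (y.1 : ℝ) + 1 := by
      rw [sqn_add]; push_cast; norm_num [sqn]; ring
    have hv3 : ((sqn (y + (0,1)) : ℤ) : ℝ) = ((sqn y : ℤ) : ℝ) + 2 * (y.2 : ℝ) + 1 := by
      rw [sqn_add]; push_cast; norm_num [sqn]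
    have hv4 : ((sqn (y + (0,-1)) : ℤ) : ℝ) = ((sqn y : ℤ) : ℝ) - 2 * (y.2 : ℝ) + 1 := by
      rw [sqn_add]; push_cast; norm_num [sqn]; ring
    simp only [Phi, if_neg hy0, if_neg hne1, if_neg hne2, if_neg hne3, if_neg hne4]
    exact core_upper (TT n) hT (y.1 : ℝ) (y.2 : ℝ) _ _ _ _ _ (sqn_cast' y)
      (by exact_mod_cast hs2) hv1 hv2 hv3 hv4
      (by exact_mod_cast hge1) (by exact_mod_cast hge2)
      (by exact_mod_cast hge3) (by exact_mod_cast hge4)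

lemma SH_Psi (n : ℕ) (hn : 2 ≤ n) (y : ℤ × ℤ) (hy : ann n y) :
    4 * Psi n y ≤ ∑ e ∈ V, Psi n (y + e) := by
  have hT := TT_pos hn
  have hy0 := hy.1
  have hy1 := one_le_sqn hy0
  rw [sumV]
  rcases eq_or_lt_of_le hy1 with hs1 | hs2
  · have h1 : sqn y = 1 := hs1.symm
    have h00 : ((0 : ℤ), (0 : ℤ)) = (0 : ℤ × ℤ) := rfl
    rcases sqn_eq_one_cases h1 with h | h | h | h <;> subst h
    · rw [show ((1,0) : ℤ × ℤ) + (1,0) = (2,0) by norm_num [Prod.ext_iff],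
        show ((1,0) : ℤ × ℤ) + (-1,0) = 0 by norm_num [Prod.ext_iff],
        show ((1,0) : ℤ × ℤ) + (0,1) = (1,1) by norm_num [Prod.ext_iff],
        show ((1,0) : ℤ × ℤ) + (0,-1) = (1,-1) by norm_num [Prod.ext_iff]]
      have key := ring1_lower n hn (y := (1,0)) (w := (2,0)) (a := (1,1)) (b := (1,-1))
        (by norm_num [sqn]) (by norm_num [sqn]) (by norm_num [sqn]) (by norm_num [sqn])
        (by norm_num [Prod.ext_iff]) (by norm_num [Prod.ext_iff])
        (by norm_num [Prod.ext_iff]) (by norm_num [Prod.ext_iff])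
      have hP0 : Psi n 0 = 1 := by simp [Psi]
      rw [hP0]
      linarith [key]
    · rw [show ((-1,0) : ℤ × ℤ) + (1,0) = 0 by norm_num [Prod.ext_iff],
        show ((-1,0) : ℤ × ℤ) + (-1,0) = (-2,0) by norm_num [Prod.ext_iff],
        show ((-1,0) : ℤ × ℤ) + (0,1) = (-1,1) by norm_num [Prod.ext_iff],
        show ((-1,0) : ℤ × ℤ) + (0,-1) = (-1,-1) by norm_num [Prod.ext_iff]]
      have key := ring1_lower n hn (y := (-1,0)) (w := (-2,0)) (a := (-1,1)) (b := (-1,-1))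
        (by norm_num [sqn]) (by norm_num [sqn]) (by norm_num [sqn]) (by norm_num [sqn])
        (by norm_num [Prod.ext_iff]) (by norm_num [Prod.ext_iff])
        (by norm_num [Prod.ext_iff]) (by norm_num [Prod.ext_iff])
      have hP0 : Psi n 0 = 1 := by simp [Psi]
      rw [hP0]
      linarith [key]
    · rw [show ((0,1) : ℤ × ℤ) + (1,0) = (1,1) by norm_num [Prod.ext_iff],
        show ((0,1) : ℤ × ℤ) + (-1,0) = (-1,1) by norm_num [Prod.ext_iff],
        show ((0,1) : ℤ × ℤ) + (0,1) = (0,2) by norm_num [Prod.ext_iff],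
        show ((0,1) : ℤ × ℤ) + (0,-1) = 0 by norm_num [Prod.ext_iff]]
      have key := ring1_lower n hn (y := (0,1)) (w := (0,2)) (a := (1,1)) (b := (-1,1))
        (by norm_num [sqn]) (by norm_num [sqn]) (by norm_num [sqn]) (by norm_num [sqn])
        (by norm_num [Prod.ext_iff]) (by norm_num [Prod.ext_iff])
        (by norm_num [Prod.ext_iff]) (by norm_num [Prod.ext_iff])
      have hP0 : Psi n 0 = 1 := by simp [Psi]
      rw [hP0]
      linarith [key]
    · rw [show ((0,-1) : ℤ × ℤ) + (1,0) = (1,-1) by norm_num [Prod.ext_iff],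
        show ((0,-1) : ℤ × ℤ) + (-1,0) = (-1,-1) by norm_num [Prod.ext_iff],
        show ((0,-1) : ℤ × ℤ) + (0,1) = 0 by norm_num [Prod.ext_iff],
        show ((0,-1) : ℤ × ℤ) + (0,-1) = (0,-2) by norm_num [Prod.ext_iff]]
      have key := ring1_lower n hn (y := (0,-1)) (w := (0,-2)) (a := (1,-1)) (b := (-1,-1))
        (by norm_num [sqn]) (by norm_num [sqn]) (by norm_num [sqn]) (by norm_num [sqn])
        (by norm_num [Prod.ext_iff]) (by norm_num [Prod.ext_iff])
        (by norm_num [Prod.ext_iff]) (by norm_num [Prod.ext_iff])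
      have hP0 : Psi n 0 = 1 := by simp [Psi]
      rw [hP0]
      linarith [key]
  · -- sqn y ≥ 2
    have hne1 : y + (1,0) ≠ 0 := nbr_ne hs2 _ (by norm_num [sqn])
    have hne2 : y + (-1,0) ≠ 0 := nbr_ne hs2 _ (by norm_num [sqn])
    have hne3 : y + (0,1) ≠ 0 := nbr_ne hs2 _ (by norm_num [sqn])
    have hne4 : y + (0,-1) ≠ 0 := nbr_ne hs2 _ (by norm_num [sqn])
    have hge1 := one_le_sqn hne1
    have hge2 := one_le_sqn hne2
    have hge3 := one_le_sqn hne3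
    have hge4 := one_le_sqn hne4
    have hv1 : ((sqn (y + (1,0)) : ℤ) : ℝ) = ((sqn y : ℤ) : ℝ) + 2 * (y.1 : ℝ) + 1 := by
      rw [sqn_add]; push_cast; norm_num [sqn]
    have hv2 : ((sqn (y + (-1,0)) : ℤ) : ℝ) = ((sqn y : ℤ) : ℝ) - 2 * (y.1 : ℝ) + 1 := by
      rw [sqn_add]; push_cast; norm_num [sqn]; ring
    have hv3 : ((sqn (y + (0,1)) : ℤ) : ℝ) = ((sqn y : ℤ) : ℝ) + 2 * (y.2 : ℝ) + 1 := by
      rw [sqn_add]; push_cast; norm_num [sqn]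
    have hv4 : ((sqn (y + (0,-1)) : ℤ) : ℝ) = ((sqn y : ℤ) : ℝ) - 2 * (y.2 : ℝ) + 1 := by
      rw [sqn_add]; push_cast; norm_num [sqn]; ring
    simp only [Psi, if_neg hy0, if_neg hne1, if_neg hne2, if_neg hne3, if_neg hne4]
    exact core_lower (TT n) hT (y.1 : ℝ) (y.2 : ℝ) _ _ _ _ _ (sqn_cast' y)
      (by exact_mod_cast hs2) hv1 hv2 hv3 hv4
      (by exact_mod_cast hge1) (by exact_mod_cast hge2)
      (by exact_mod_cast hge3) (by exact_mod_cast hge4)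

noncomputable def Bx (n : ℕ) : Finset (ℤ × ℤ) :=
  Finset.Icc (-(n : ℤ) - 1, -(n : ℤ) - 1) ((n : ℤ) + 1, (n : ℤ) + 1)

lemma mem_Bx {n : ℕ} {z : ℤ × ℤ} (h1 : z.1 ^ 2 ≤ ((n : ℤ) + 1) ^ 2)
    (h2 : z.2 ^ 2 ≤ ((n : ℤ) + 1) ^ 2) : z ∈ Bx n := by
  have hn1 : (1 : ℤ) ≤ (n : ℤ) + 1 := by omega
  simp only [Bx, Finset.mem_Icc, Prod.le_def]
  refine ⟨⟨?_, ?_⟩, ?_, ?_⟩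
  · nlinarith [sq_nonneg (z.1 + ((n : ℤ) + 1))]
  · nlinarith [sq_nonneg (z.2 + ((n : ℤ) + 1))]
  · nlinarith [sq_nonneg (z.1 - ((n : ℤ) + 1))]
  · nlinarith [sq_nonneg (z.2 - ((n : ℤ) + 1))]

lemma sqn_le_of_mem_Bx {n : ℕ} {z : ℤ × ℤ} (hz : z ∈ Bx n) :
    sqn z ≤ 2 * ((n : ℤ) + 1) ^ 2 := by
  simp only [Bx, Finset.mem_Icc, Prod.le_def] at hz
  obtain ⟨⟨a1, a2⟩, b1, b2⟩ := hz
  simp only [sqn]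
  nlinarith

lemma ann_mem_Bx {n : ℕ} {z : ℤ × ℤ} (hz : ann n z) : z ∈ Bx n := by
  obtain ⟨-, h2⟩ := hz
  have h1 : z.1 ^ 2 ≤ sqn z := by simp only [sqn]; nlinarith [sq_nonneg z.2]
  have h3 : z.2 ^ 2 ≤ sqn z := by simp only [sqn]; nlinarith [sq_nonneg z.1]
  have hn0 : (0 : ℤ) ≤ (n : ℤ) := Int.ofNat_nonneg n
  exact mem_Bx (by nlinarith [hn0]) (by nlinarith [hn0])

lemma nbr_mem_Bx {n : ℕ} {z e : ℤ × ℤ} (hz : ann n z) (he : e ∈ V) : z + e ∈ Bx n := by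
  obtain ⟨-, h2⟩ := hz
  have h1 : z.1 ^ 2 ≤ sqn z := by simp only [sqn]; nlinarith [sq_nonneg z.2]
  have h3 : z.2 ^ 2 ≤ sqn z := by simp only [sqn]; nlinarith [sq_nonneg z.1]
  have hz1 : z.1 ^ 2 < (n : ℤ) ^ 2 := lt_of_le_of_lt h1 h2
  have hz2 : z.2 ^ 2 < (n : ℤ) ^ 2 := lt_of_le_of_lt h3 h2
  have hn0 : (0 : ℤ) ≤ (n : ℤ) := by positivity
  have ha1 : -(n : ℤ) ≤ z.1 ∧ z.1 ≤ (n : ℤ) := by constructor <;> nlinarith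
  have ha2 : -(n : ℤ) ≤ z.2 ∧ z.2 ≤ (n : ℤ) := by constructor <;> nlinarith
  have he' : e.1 ^ 2 ≤ 1 ∧ e.2 ^ 2 ≤ 1 := by
    fin_cases he <;> norm_num
  have hb1 : -1 ≤ e.1 ∧ e.1 ≤ 1 := by constructor <;> nlinarith [he'.1]
  have hb2 : -1 ≤ e.2 ∧ e.2 ≤ 1 := by constructor <;> nlinarith [he'.2]
  apply mem_Bx
  · have : (z + e).1 = z.1 + e.1 := rfl
    rw [this]; nlinarith [ha1.1, ha1.2, hb1.1, hb1.2]
  · have : (z + e).2 = z.2 + e.2 := rfl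
    rw [this]; nlinarith [ha2.1, ha2.2, hb2.1, hb2.2]

lemma maxprin (n : ℕ) (f g : ℤ × ℤ → ℝ)
    (hf : ∀ y, ann n y → 4 * f y ≤ ∑ e ∈ V, f (y + e))
    (hg : ∀ y, ann n y → ∑ e ∈ V, g (y + e) ≤ 4 * g y)
    (hb : ∀ z, z ∈ Bx n → ¬ ann n z → f z ≤ g z) :
    ∀ y, ann n y → f y ≤ g y := by
  intro y hy
  have hM : (0 : ℝ) ≤ 2 * ((n : ℝ) + 1) ^ 2 := by positivity
  have key : ∀ ε : ℝ, 0 < ε → f y - g y ≤ ε * (2 * ((n : ℝ) + 1) ^ 2) := by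
    intro ε hε
    set W : ℤ × ℤ → ℝ := fun z => f z - g z + ε * ((sqn z : ℤ) : ℝ) with hW
    have hBne : (Bx n).Nonempty := ⟨y, ann_mem_Bx hy⟩
    obtain ⟨z0, hz0B, hz0max⟩ := Finset.exists_max_image (Bx n) W hBne
    have hz0ann : ¬ ann n z0 := by
      intro hz0ann
      have hfz := hf z0 hz0ann
      have hgz := hg z0 hz0ann
      have hsq : ∑ e ∈ V, ((sqn (z0 + e) : ℤ) : ℝ) = 4 * ((sqn z0 : ℤ) : ℝ) + 4 := by
        rw [sumV (fun e => ((sqn (z0 + e) : ℤ) : ℝ))]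
        push_cast [sqn_add]
        norm_num [sqn]
        ring
      have hsplit : ∑ e ∈ V, W (z0 + e)
          = ∑ e ∈ V, f (z0 + e) - ∑ e ∈ V, g (z0 + e)
            + ε * ∑ e ∈ V, ((sqn (z0 + e) : ℤ) : ℝ) := by
        rw [sumV (fun e => W (z0 + e)), sumV (fun e => f (z0 + e)), sumV (fun e => g (z0 + e)),
          sumV (fun e => ((sqn (z0 + e) : ℤ) : ℝ))]
        simp only [hW]
        ring
      have hle : ∀ e ∈ V, W (z0 + e) ≤ W z0 := fun e he =>
        hz0max _ (nbr_mem_Bx hz0ann he)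
      have hsumle : ∑ e ∈ V, W (z0 + e) ≤ 4 * W z0 := by
        rw [sumV (fun e => W (z0 + e))]
        have h1 := hle (1, 0) (by decide)
        have h2 := hle (-1, 0) (by decide)
        have h3 := hle (0, 1) (by decide)
        have h4 := hle (0, -1) (by decide)
        linarith
      have hcontr : 4 * W z0 + 4 * ε ≤ ∑ e ∈ V, W (z0 + e) := by
        rw [hsplit, hsq]
        have : 4 * W z0 = 4 * f z0 - 4 * g z0 + ε * (4 * ((sqn z0 : ℤ) : ℝ)) := by
          simp only [hW]; ring
        rw [this]
        nlinarith [hfz, hgz, hε]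
      linarith
    have hfg := hb z0 hz0B hz0ann
    have hsb : ((sqn z0 : ℤ) : ℝ) ≤ 2 * ((n : ℝ) + 1) ^ 2 := by
      have := sqn_le_of_mem_Bx hz0B
      have : ((sqn z0 : ℤ) : ℝ) ≤ ((2 * ((n : ℤ) + 1) ^ 2 : ℤ) : ℝ) := by exact_mod_cast this
      push_cast at this
      linarith
    have hWy : W y ≤ W z0 := hz0max y (ann_mem_Bx hy)
    have hsy : (0 : ℝ) ≤ ((sqn y : ℤ) : ℝ) := by exact_mod_cast sqn_nonneg y
    have hWz0 : W z0 ≤ ε * (2 * ((n : ℝ) + 1) ^ 2) := by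
      simp only [hW]
      nlinarith [hfg, hsb, hε]
    simp only [hW] at hWy
    nlinarith [hWy, hWz0, hsy, hε]
  by_contra hlt
  push_neg at hlt
  have hδ : 0 < f y - g y := by linarith
  have hM1 : (0 : ℝ) < 2 * ((n : ℝ) + 1) ^ 2 := by positivity
  have h5 := key ((f y - g y) / (2 * (2 * ((n : ℝ) + 1) ^ 2))) (by positivity)
  have heq : (f y - g y) / (2 * (2 * ((n : ℝ) + 1) ^ 2)) * (2 * ((n : ℝ) + 1) ^ 2)
      = (f y - g y) / 2 := by
    field_simp
  rw [heq] at h5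
  linarith

/-- There is a constant `C > 0` such that for all integers `n ≥ 2` and all `x ∈ ℤ²` with
`0 < |x| < n`: for simple random walk on `ℤ²` started at `x`, letting `η` be the smallest
`m > 0` with `S_m = 0` or `|S_m| ≥ n`, one has
`(log n − log|x| − C)/log n ≤ P(S_η = 0) ≤ (log n − log|x| + C)/log n`
(`log` is base `2`). -/
theorem stmt2 :
    ∃ C : ℝ, 0 < C ∧
      ∀ (Ω : Type) [MeasurableSpace Ω] (μ : Measure Ω) [IsProbabilityMeasure μ]
        (X : ℕ → Ω → ℤ × ℤ),
        (∀ i, Measurable (X i)) →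
        (∀ i, μ.map (X i) = stepDist) →
        iIndepFun X μ →
        ∀ (n : ℕ), 2 ≤ n → ∀ x : ℤ × ℤ, 0 < znorm x → znorm x < n →
          (Real.logb 2 n - Real.logb 2 (znorm x) - C) / Real.logb 2 n ≤
              (μ {ω | walkFrom X x (hitTime X x n ω) ω = 0}).toReal ∧
            (μ {ω | walkFrom X x (hitTime X x n ω) ω = 0}).toReal ≤
              (Real.logb 2 n - Real.logb 2 (znorm x) + C) / Real.logb 2 n := by
  refine ⟨50, by norm_num, ?_⟩
  intro Ω _ μ _ X hX hmap hind n hn x hx1 hx2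
  have hxann : ann n x := (ann_iff n x).mpr ⟨hx1, hx2⟩
  have hT : 0 < TT n := TT_pos hn
  -- Mh bounds
  have hMle : ∀ z : ℤ × ℤ, z ≠ 0 → Mh n z ≤ 1 := by
    intro z hz
    rw [← hit_measure μ X hX hmap hind z n hz]
    exact prob_le_one
  -- the function F
  set F : ℤ × ℤ → ℝ :=
    fun z => if z = 0 then 1 else if ann n z then (Mh n z).toReal else 0 with hF
  have hrec : ∀ y, ann n y → 4 * F y = ∑ e ∈ V, F (y + e) := by
    intro y hy
    have h1 : F y = (Mh n y).toReal := by
      simp only [hF, if_neg hy.1, if_pos hy]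
    have hfin : ∀ e ∈ V,
        (if y + e = 0 then (1 : ENNReal) else if ann n (y + e) then Mh n (y + e) else 0)
          ≠ (⊤ : ENNReal) := by
      intro e _
      split_ifs with h h'
      · exact ENNReal.one_ne_top
      · exact ne_top_of_le_ne_top ENNReal.one_ne_top (hMle _ h'.1)
      · exact ENNReal.zero_ne_top
    have h2 : (Mh n y).toReal = (4 : ℝ)⁻¹ * ∑ e ∈ V,
        (if y + e = 0 then (1 : ENNReal) else if ann n (y + e) then Mh n (y + e) else 0).toReal := by
      rw [Mh_rec n y, ENNReal.toReal_mul, ENNReal.toReal_sum hfin]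
      congr 1
      simp
    have h3 : ∀ e ∈ V,
        (if y + e = 0 then (1 : ENNReal) else if ann n (y + e) then Mh n (y + e) else 0).toReal
          = F (y + e) := by
      intro e _
      simp only [hF]
      split_ifs with h h'
      · simp
      · rfl
      · simp
    rw [h1, h2, Finset.sum_congr rfl h3]
    ring
  -- boundary for Phi
  have hbPhi : ∀ z, z ∈ Bx n → ¬ ann n z → F z ≤ Phi n z := by
    intro z hzB hzann
    by_cases hz0 : z = 0
    · subst hz0
      simp only [hF, if_pos rfl, Phi, if_pos rfl]
      exact le_refl 1
    · have hout : (n : ℤ) ^ 2 ≤ sqn z := by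
        by_contra hcon
        exact hzann ⟨hz0, by omega⟩
      have hFz : F z = 0 := by simp only [hF, if_neg hz0, if_neg hzann]
      rw [hFz, Phi, if_neg hz0]
      set s : ℝ := ((sqn z : ℤ) : ℝ) with hs
      have hs1 : (1 : ℝ) ≤ s := by rw [hs]; exact_mod_cast one_le_sqn hz0
      have hsub : s ≤ 8 * (n : ℝ) ^ 2 := by
        have h8 := sqn_le_of_mem_Bx hzB
        have hcast : s ≤ 2 * ((n : ℝ) + 1) ^ 2 := by rw [hs]; exact_mod_cast h8
        have hn1 : (1 : ℝ) ≤ (n : ℝ) := by exact_mod_cast le_trans (by norm_num) hn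
        nlinarith
      have hlog : Real.log s ≤ 3 * Real.log 2 + TT n := by
        have h1 : Real.log s ≤ Real.log (8 * (n : ℝ) ^ 2) :=
          Real.log_le_log (by linarith) hsub
        have h2 : Real.log (8 * (n : ℝ) ^ 2) = Real.log 8 + TT n := by
          rw [Real.log_mul (by norm_num) (by positivity)]
          rfl
        have h3 : Real.log (8 : ℝ) = 3 * Real.log 2 := by
          rw [show (8 : ℝ) = 2 ^ 3 by norm_num, Real.log_pow]
          push_cast; ring
        rw [h2, h3] at h1
        exact h1
      apply div_nonneg _ hT.le
      have hl2 : Real.log 2 < 0.7 := log_two_lt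
      have h4s : 4 / s ≤ 4 := by
        rw [div_le_iff₀ (by linarith)]
        nlinarith
      linarith
  -- boundary for Psi
  have hbPsi : ∀ z, z ∈ Bx n → ¬ ann n z → Psi n z ≤ F z := by
    intro z hzB hzann
    by_cases hz0 : z = 0
    · subst hz0
      simp only [hF, if_pos rfl, Psi, if_pos rfl]
      exact le_refl 1
    · have hout : (n : ℤ) ^ 2 ≤ sqn z := by
        by_contra hcon
        exact hzann ⟨hz0, by omega⟩
      have hFz : F z = 0 := by simp only [hF, if_neg hz0, if_neg hzann]
      rw [hFz, Psi, if_neg hz0]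
      set s : ℝ := ((sqn z : ℤ) : ℝ) with hs
      have hs1 : (1 : ℝ) ≤ s := by rw [hs]; exact_mod_cast one_le_sqn hz0
      have hsge : ((n : ℝ)) ^ 2 ≤ s := by rw [hs]; exact_mod_cast hout
      have hlog : TT n ≤ Real.log s := Real.log_le_log (by positivity) hsge
      apply div_nonpos_of_nonpos_of_nonneg _ hT.le
      have h3s : 3 / s ≤ 3 := by
        rw [div_le_iff₀ (by linarith)]
        nlinarith
      linarith
  -- max principle
  have hup : F x ≤ Phi n x :=
    maxprin n F (Phi n) (fun y hy => le_of_eq (hrec y hy)) (SH_Phi n hn) hbPhi x hxann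
  have hlo : Psi n x ≤ F x :=
    maxprin n (Psi n) F (SH_Psi n hn) (fun y hy => ge_of_eq (hrec y hy)) hbPsi x hxann
  -- identification of the probability
  have hProb : (μ {ω | walkFrom X x (hitTime X x n ω) ω = 0}).toReal = F x := by
    rw [hit_measure μ X hX hmap hind x n hxann.1]
    simp only [hF, if_neg hxann.1, if_pos hxann]
  rw [hProb]
  -- numeric conversions
  set s : ℝ := ((sqn x : ℤ) : ℝ) with hs
  have hs1 : (1 : ℝ) ≤ s := by rw [hs]; exact_mod_cast one_le_sqn hxann.1
  have hsl : Real.log s < TT n := by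
    have : s < ((n : ℝ)) ^ 2 := by rw [hs]; exact_mod_cast hxann.2
    exact Real.log_lt_log (by linarith) this
  have hlogs0 : 0 ≤ Real.log s := Real.log_nonneg hs1
  have hl2pos : (0 : ℝ) < Real.log 2 := Real.log_pos (by norm_num)
  have hl2b : (0.69 : ℝ) < Real.log 2 := by
    have := Real.log_two_gt_d9
    linarith
  have hlognpos : (0 : ℝ) < Real.log n := by
    apply Real.log_pos
    exact_mod_cast lt_of_lt_of_le one_lt_two hn
  have hTT2 : TT n = 2 * Real.log n := by
    rw [TT, Real.log_pow]
    push_cast; ring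
  have hlogb_n : Real.logb 2 n = Real.log n / Real.log 2 := by rw [Real.logb]
  have hlogb_x : Real.logb 2 (znorm x) = (Real.log s / 2) / Real.log 2 := by
    rw [Real.logb, znorm_eq_sqrt, Real.log_sqrt (by exact_mod_cast sqn_nonneg x)]
  constructor
  · -- lower bound
    have hPsix : (TT n - Real.log s - 12) / TT n ≤ Psi n x := by
      rw [Psi, if_neg hxann.1, ← hs]
      apply div_le_div_of_nonneg_right _ hT.le
      have : 0 < 3 / s := by positivity
      linarith
    have hconv : (Real.logb 2 n - Real.logb 2 (znorm x) - 50) / Real.logb 2 n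
        = (2 * Real.log n - Real.log s - 100 * Real.log 2) / (2 * Real.log n) := by
      rw [hlogb_n, hlogb_x]
      field_simp
      ring
    rw [hconv]
    have hstep : (2 * Real.log n - Real.log s - 100 * Real.log 2) / (2 * Real.log n)
        ≤ (TT n - Real.log s - 12) / TT n := by
      rw [hTT2]
      apply div_le_div_of_nonneg_right _ (by linarith)
      linarith
    linarith [hstep, hPsix, hlo]
  · -- upper bound
    have hPhix : Phi n x ≤ (TT n - Real.log s + 15) / TT n := by
      rw [Phi, if_neg hxann.1, ← hs]
      apply div_le_div_of_nonneg_right _ hT.le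
      have : 0 < 4 / s := by positivity
      linarith
    have hconv : (Real.logb 2 n - Real.logb 2 (znorm x) + 50) / Real.logb 2 n
        = (2 * Real.log n - Real.log s + 100 * Real.log 2) / (2 * Real.log n) := by
      rw [hlogb_n, hlogb_x]
      field_simp
      ring
    rw [hconv]
    have hstep : (TT n - Real.log s + 15) / TT n
        ≤ (2 * Real.log n - Real.log s + 100 * Real.log 2) / (2 * Real.log n) := by
      rw [hTT2]
      apply div_le_div_of_nonneg_right _ (by linarith)
      linarith
    linarith [hstep, hPhix, hup]
end

section
/- There exists a constant C > 0 such that for every integer n ≥ 1 and every z ∈ ℤ², simple random walk on ℤ² started at the origin satisfies P(S_n = z) ≤ C/n. -/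
open MeasureTheory ProbabilityTheory

-- path counts for 1D ±1 walk
def cnt : ℕ → ℤ → ℕ
  | 0, k => if k = 0 then 1 else 0
  | n+1, k => cnt n (k-1) + cnt n (k+1)

lemma cnt_eq_zero_of_lt : ∀ (n : ℕ) (k : ℤ), k < -(n:ℤ) → cnt n k = 0
  | 0, k, h => by simp [cnt]; omega
  | n+1, k, h => by
      simp only [cnt]
      rw [cnt_eq_zero_of_lt n (k-1) (by push_cast at h ⊢; omega),
          cnt_eq_zero_of_lt n (k+1) (by push_cast at h ⊢; omega)]

lemma cnt_formula : ∀ (n : ℕ) (j : ℕ), cnt n (2*(j:ℤ) - n) = n.choose j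
  | 0, j => by
      simp only [cnt, Nat.cast_zero, sub_zero]
      rcases Nat.eq_zero_or_pos j with h | h
      · simp [h]
      · rw [if_neg (by omega), Nat.choose_eq_zero_of_lt (by omega)]
  | n+1, j => by
      simp only [cnt]
      rcases Nat.eq_zero_or_pos j with rfl | h
      · rw [show (2*((0:ℕ):ℤ) - (n+1:ℕ)) - 1 = -(n:ℤ) - 2 by push_cast; ring,
            cnt_eq_zero_of_lt n _ (by omega),
            show (2*((0:ℕ):ℤ) - (n+1:ℕ)) + 1 = 2*((0:ℕ):ℤ) - n by push_cast; ring,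
            cnt_formula n 0]
        simp
      · obtain ⟨j', rfl⟩ := Nat.exists_eq_add_of_le h
        rw [show (2*((1+j':ℕ):ℤ) - (n+1:ℕ)) - 1 = 2*(j':ℤ) - n by push_cast; ring,
            show (2*((1+j':ℕ):ℤ) - (n+1:ℕ)) + 1 = 2*((j'+1:ℕ):ℤ) - n by push_cast; ring,
            cnt_formula n j', cnt_formula n (j'+1)]
        rw [show 1 + j' = j' + 1 by ring, Nat.choose_succ_succ']

lemma cnt_eq_zero_of_odd : ∀ (n : ℕ) (k : ℤ), ¬ (2 ∣ (n + k)) → cnt n k = 0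
  | 0, k, h => by simp [cnt]; omega
  | n+1, k, h => by
      simp only [cnt]
      rw [cnt_eq_zero_of_odd n (k-1) (by push_cast at h ⊢; omega),
          cnt_eq_zero_of_odd n (k+1) (by push_cast at h ⊢; omega)]

lemma cnt_le (n : ℕ) (k : ℤ) : cnt n k ≤ n.choose (n/2) := by
  by_cases hpar : (2:ℤ) ∣ (n + k)
  · by_cases hlow : k < -(n:ℤ)
    · rw [cnt_eq_zero_of_lt n k hlow]; exact Nat.zero_le _
    · obtain ⟨j, hj⟩ : ∃ j : ℕ, (k:ℤ) = 2*(j:ℤ) - n := by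
        obtain ⟨m, hm⟩ := hpar
        refine ⟨m.toNat, ?_⟩
        have : (0:ℤ) ≤ m := by omega
        rw [Int.toNat_of_nonneg this]; omega
      rw [hj, cnt_formula]
      exact Nat.choose_le_middle j n
  · rw [cnt_eq_zero_of_odd n k hpar]; exact Nat.zero_le _

lemma cb_bound : ∀ m : ℕ, (2*m+1) * (Nat.centralBinom m)^2 ≤ 16^m := by
  intro m
  induction m with
  | zero => simp [Nat.centralBinom]
  | succ m ih =>
      have key : (m+1) * Nat.centralBinom (m+1) = 2 * (2*m+1) * Nat.centralBinom m :=
        Nat.succ_mul_centralBinom_succ m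
      have hpos : 0 < (m+1)^2 := by positivity
      refine Nat.le_of_mul_le_mul_left ?_ hpos
      calc (m+1)^2 * ((2*(m+1)+1) * (Nat.centralBinom (m+1))^2)
          = (2*(m+1)+1) * ((m+1) * Nat.centralBinom (m+1))^2 := by ring
        _ = (2*(m+1)+1) * (2 * (2*m+1) * Nat.centralBinom m)^2 := by rw [key]
        _ = (2*m+3)*(2*m+1)*4 * ((2*m+1) * (Nat.centralBinom m)^2) := by ring
        _ ≤ (2*m+3)*(2*m+1)*4 * 16^m := Nat.mul_le_mul_left _ ih
        _ ≤ ((m+1)^2 * 16) * 16^m := Nat.mul_le_mul_right _ (by nlinarith)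
        _ = (m+1)^2 * 16^(m+1) := by rw [pow_succ]; ring

lemma middle_sq_bound (n : ℕ) : (n+1) * (n.choose (n/2))^2 ≤ 4^n := by
  rcases Nat.even_or_odd n with ⟨m, hm⟩ | ⟨m, hm⟩
  · subst hm
    have h1 : (m+m)/2 = m := by omega
    have h2 : (m+m).choose m = Nat.centralBinom m := by rw [Nat.centralBinom]; ring_nf
    rw [h1, h2]
    calc (m+m+1) * (Nat.centralBinom m)^2 = (2*m+1) * (Nat.centralBinom m)^2 := by ring_nf
      _ ≤ 16^m := cb_bound m
      _ = 4^(m+m) := by rw [show (16:ℕ) = 4^2 by norm_num, ← pow_mul]; ring_nf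
  · subst hm
    have h1 : (2*m+1)/2 = m := by omega
    rw [h1]
    have hdbl : 2 * (2*m+1).choose m = Nat.centralBinom (m+1) := by
      have hs : (2*m+1).choose (m+1) = (2*m+1).choose m := by
        rw [← Nat.choose_symm (by omega)]
        congr 1; omega
      have : Nat.centralBinom (m+1) = (2*m+1).choose m + (2*m+1).choose (m+1) := by
        rw [Nat.centralBinom]
        rw [show 2*(m+1) = (2*m+1) + 1 by ring]
        exact Nat.choose_succ_succ' (2*m+1) m
      omega
    have hcb := cb_bound (m+1)
    have h4 : 4 * ((2*m+1+1) * ((2*m+1).choose m)^2) ≤ 4 * 4^(2*m+1) := by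
      calc 4 * ((2*m+1+1) * ((2*m+1).choose m)^2)
          = (2*m+2) * (2*(2*m+1).choose m)^2 := by ring
        _ = (2*m+2) * (Nat.centralBinom (m+1))^2 := by rw [hdbl]
        _ ≤ (2*(m+1)+1) * (Nat.centralBinom (m+1))^2 := by
              apply Nat.mul_le_mul_right; omega
        _ ≤ 16^(m+1) := hcb
        _ = 4 * 4^(2*m+1) := by
              rw [show (16:ℕ) = 4^2 by norm_num, ← pow_mul,
                  show 2*(m+1) = (2*m+1)+1 by ring, pow_succ]; ring
    exact Nat.le_of_mul_le_mul_left h4 (by norm_num)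

lemma stepDist_q1 : stepDist {((1:ℤ),(0:ℤ))} = 4⁻¹ := by
  simp [stepDist, Measure.dirac_apply, Set.indicator_apply, Prod.ext_iff]
lemma stepDist_q2 : stepDist {((-1:ℤ),(0:ℤ))} = 4⁻¹ := by
  simp [stepDist, Measure.dirac_apply, Set.indicator_apply, Prod.ext_iff]
lemma stepDist_q3 : stepDist {((0:ℤ),(1:ℤ))} = 4⁻¹ := by
  simp [stepDist, Measure.dirac_apply, Set.indicator_apply, Prod.ext_iff]
lemma stepDist_q4 : stepDist {((0:ℤ),(-1:ℤ))} = 4⁻¹ := by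
  simp [stepDist, Measure.dirac_apply, Set.indicator_apply, Prod.ext_iff]
lemma stepDist_compl : stepDist ({(1,0),(-1,0),(0,1),(0,-1)} : Set (ℤ×ℤ))ᶜ = 0 := by
  simp [stepDist, Measure.dirac_apply, Set.indicator_apply]

noncomputable def pmass (n : ℕ) (z : ℤ × ℤ) : ENNReal :=
  (cnt n (z.1+z.2) : ENNReal) * (cnt n (z.1-z.2) : ENNReal) * ((4:ENNReal)⁻¹)^n

lemma walk_law {Ω : Type} [MeasurableSpace Ω] (μ : Measure Ω) [IsProbabilityMeasure μ]
    (X : ℕ → Ω → ℤ × ℤ) (hm : ∀ i, Measurable (X i))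
    (hd : ∀ i, μ.map (X i) = stepDist)
    (hi : iIndepFun X μ) :
    ∀ n z, μ {ω | (∑ i ∈ Finset.Icc 1 n, X i ω) = z} = pmass n z := by
  intro n
  induction n with
  | zero =>
      rintro ⟨a, b⟩
      rw [show (Finset.Icc 1 0 : Finset ℕ) = ∅ from rfl]
      simp only [Finset.sum_empty]
      by_cases hz : a = 0 ∧ b = 0
      · obtain ⟨rfl, rfl⟩ := hz
        have h1 : {ω : Ω | (0 : ℤ × ℤ) = ((0:ℤ), (0:ℤ))} = Set.univ := by
          ext ω; simp; rfl
        rw [h1, measure_univ]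
        simp [pmass, cnt]
      · have h1 : {ω : Ω | (0 : ℤ × ℤ) = (a, b)} = ∅ := by
          ext ω
          simp only [Set.mem_setOf_eq, Set.mem_empty_iff_false, iff_false]
          intro h
          apply hz
          rw [← Prod.mk_zero_zero, Prod.mk.injEq] at h
          exact ⟨h.1.symm, h.2.symm⟩
        rw [h1, measure_empty]
        have h2 : a + b ≠ 0 ∨ a - b ≠ 0 := by omega
        simp only [pmass]
        rcases h2 with h | h
        · rw [show cnt 0 (a+b) = 0 by simp [cnt]; omega]; simp
        · rw [show cnt 0 (a-b) = 0 by simp [cnt]; omega]; simp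
  | succ n ih =>
      rintro ⟨z1, z2⟩
      set S : Ω → ℤ × ℤ := fun ω => ∑ i ∈ Finset.Icc 1 n, X i ω with hSdef
      have hS : Measurable S := Finset.measurable_sum _ (fun i _ => hm i)
      have hsum : ∀ ω, ∑ i ∈ Finset.Icc 1 (n+1), X i ω = S ω + X (n+1) ω := by
        intro ω; exact Finset.sum_Icc_succ_top (by omega) _
      have hindep : IndepFun S (X (n+1)) μ := by
        have h0 : (∑ j ∈ Finset.Icc 1 n, X j) = S := by
          ext ω
          · simp [hSdef]
          · simp [hSdef]
        rw [← h0]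
        exact hi.indepFun_finsetSum_of_notMem hm (by simp)
      have hXpre : ∀ s : Set (ℤ×ℤ), MeasurableSet s → μ (X (n+1) ⁻¹' s) = stepDist s := by
        intro s hs
        rw [← hd (n+1), Measure.map_apply (hm (n+1)) hs]
      -- the four atoms
      set A : ℤ × ℤ → Set Ω := fun e => S ⁻¹' {(z1, z2) - e} ∩ X (n+1) ⁻¹' {e} with hAdef
      have hAmeas : ∀ e, MeasurableSet (A e) := fun e =>
        (hS (measurableSet_singleton _)).inter (hm (n+1) (measurableSet_singleton _))
      have hAval : ∀ e, μ (A e) = pmass n ((z1, z2) - e) * stepDist {e} := by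
        intro e
        rw [hAdef]
        rw [hindep.measure_inter_preimage_eq_mul _ _ (measurableSet_singleton _)
              (measurableSet_singleton _)]
        rw [hXpre _ (measurableSet_singleton _)]
        congr 1
        exact ih ((z1, z2) - e)
      set E4 : Set (ℤ × ℤ) := {(1,0),(-1,0),(0,1),(0,-1)} with hE4def
      have hE4meas : MeasurableSet E4 := (Set.toFinite _).measurableSet
      set T : Set Ω := {ω | S ω + X (n+1) ω = (z1, z2)} with hTdef
      have hTmeas : MeasurableSet T := (hS.add (hm (n+1))) (measurableSet_singleton (z1, z2))
      have hgoal : {ω | (∑ i ∈ Finset.Icc 1 (n+1), X i ω) = (z1, z2)} = T := by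
        ext ω; simp only [Set.mem_setOf_eq, hsum, hTdef]
      rw [hgoal]
      -- split off null part
      have hnull : μ (T \ X (n+1) ⁻¹' E4) = 0 := by
        have hsub : T \ X (n+1) ⁻¹' E4 ⊆ X (n+1) ⁻¹' E4ᶜ := by
          intro ω hω; exact hω.2
        refine le_antisymm (le_trans (measure_mono hsub) ?_) (by simp)
        rw [hXpre _ hE4meas.compl, hE4def]
        exact le_of_eq stepDist_compl
      have hsplitT : μ T = μ (T ∩ X (n+1) ⁻¹' E4) := by
        rw [← measure_inter_add_diff T (hm (n+1) hE4meas), hnull, add_zero]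
      -- split the four
      have hunion : T ∩ X (n+1) ⁻¹' E4 = (A (1,0) ∪ A (-1,0)) ∪ (A (0,1) ∪ A (0,-1)) := by
        ext ω
        simp [hTdef, hAdef, hE4def, Set.mem_inter_iff, Set.mem_setOf_eq,
          Set.mem_preimage, Set.mem_singleton_iff, Set.mem_union, Set.mem_insert_iff,
          Prod.ext_iff, Prod.fst_add, Prod.snd_add, Prod.fst_sub, Prod.snd_sub]
        omega
      have hdisj : ∀ e e' : ℤ × ℤ, e ≠ e' → Disjoint (A e) (A e') := by
        intro e e' hne
        rw [Set.disjoint_left]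
        rintro ω ⟨_, h2⟩ ⟨_, h4⟩
        rw [Set.mem_preimage, Set.mem_singleton_iff] at h2 h4
        exact hne (h2.symm.trans h4)
      have hbig : Disjoint (A (1,0) ∪ A (-1,0)) (A (0,1) ∪ A (0,-1)) := by
        refine Set.disjoint_union_left.2
          ⟨Set.disjoint_union_right.2 ⟨hdisj _ _ (by decide), hdisj _ _ (by decide)⟩,
           Set.disjoint_union_right.2 ⟨hdisj _ _ (by decide), hdisj _ _ (by decide)⟩⟩
      rw [hsplitT, hunion, measure_union hbig ((hAmeas _).union (hAmeas _)),
          measure_union (hdisj _ _ (by decide)) (hAmeas _),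
          measure_union (hdisj _ _ (by decide)) (hAmeas _),
          hAval, hAval, hAval, hAval, stepDist_q1, stepDist_q2, stepDist_q3, stepDist_q4]
      simp only [pmass, Prod.mk_sub_mk, cnt]
      rw [show z1 - 1 + (z2 - 0) = (z1+z2) - 1 by ring,
          show z1 - 1 - (z2 - 0) = (z1-z2) - 1 by ring,
          show z1 - -1 + (z2 - 0) = (z1+z2) + 1 by ring,
          show z1 - -1 - (z2 - 0) = (z1-z2) + 1 by ring,
          show z1 - 0 + (z2 - 1) = (z1+z2) - 1 by ring,
          show z1 - 0 - (z2 - 1) = (z1-z2) + 1 by ring,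
          show z1 - 0 + (z2 - -1) = (z1+z2) + 1 by ring,
          show z1 - 0 - (z2 - -1) = (z1-z2) - 1 by ring]
      push_cast
      rw [pow_succ]
      ring

/-- There is a constant `C > 0` such that for every `n ≥ 1` and every `z ∈ ℤ²`,
simple random walk on `ℤ²` started at the origin satisfies `P(S_n = z) ≤ C / n`. -/
theorem stmt5 :
    ∃ C : ℝ, 0 < C ∧
      ∀ (Ω : Type) [MeasurableSpace Ω] (μ : Measure Ω) [IsProbabilityMeasure μ]
        (X : ℕ → Ω → ℤ × ℤ),
        (∀ i, Measurable (X i)) →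
        (∀ i, μ.map (X i) = stepDist) →
        iIndepFun X μ →
        ∀ (n : ℕ), 1 ≤ n → ∀ z : ℤ × ℤ,
          (μ {ω | walkFrom X 0 n ω = z}).toReal ≤ C / n := by
  refine ⟨1, one_pos, ?_⟩
  intro Ω _ μ _ X hm hd hi n hn z
  have hset : {ω | walkFrom X 0 n ω = z} = {ω | (∑ i ∈ Finset.Icc 1 n, X i ω) = z} := by
    ext ω; simp [walkFrom]
  rw [hset, walk_law μ X hm hd hi n z]
  set c1 := cnt n (z.1 + z.2) with hc1
  set c2 := cnt n (z.1 - z.2) with hc2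
  set a := n.choose (n/2) with ha
  have h1 : c1 ≤ a := cnt_le n _
  have h2 : c2 ≤ a := cnt_le n _
  have hnat : (n+1) * a^2 ≤ 4^n := middle_sq_bound n
  have htr : (pmass n z).toReal = (c1 : ℝ) * (c2 : ℝ) * ((4:ℝ)⁻¹)^n := by
    simp [pmass, ENNReal.toReal_mul, ENNReal.toReal_pow, ENNReal.toReal_inv, ← hc1, ← hc2]
  rw [htr]
  have hn0 : (0:ℝ) < n := by exact_mod_cast hn
  rw [show (1:ℝ)/(n:ℝ) = 1/(n:ℝ) from rfl, le_div_iff₀ hn0]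
  have hR : ((n:ℝ)+1) * (a:ℝ)^2 ≤ 4^n := by exact_mod_cast hnat
  have h5 : (((n:ℝ)+1) * (a:ℝ)^2) * ((4:ℝ)⁻¹)^n ≤ (4:ℝ)^n * ((4:ℝ)⁻¹)^n :=
    mul_le_mul_of_nonneg_right hR (by positivity)
  have h6 : (4:ℝ)^n * ((4:ℝ)⁻¹)^n = 1 := by
    rw [← mul_pow]; norm_num
  have h1' : (c1:ℝ) ≤ a := by exact_mod_cast h1
  have h2' : (c2:ℝ) ≤ a := by exact_mod_cast h2
  have hc1p : (0:ℝ) ≤ c1 := by positivity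
  have hc2p : (0:ℝ) ≤ c2 := by positivity
  have hq : (0:ℝ) ≤ ((4:ℝ)⁻¹)^n := by positivity
  nlinarith [mul_le_mul h1' h2' hc2p (by positivity : (0:ℝ) ≤ (a:ℝ)),
    mul_le_mul_of_nonneg_right
      (mul_le_mul h1' h2' hc2p (by positivity : (0:ℝ) ≤ (a:ℝ))) hq]
end

section
/- There exists a constant C > 0 such that for every integer k ≥ 2 and every x ∈ A_{k−1}, simple random walk (S_j)_{j≥0} on ℤ² started at x satisfies P(S_{s_k − s_{k−1}} ∉ A_k) ≤ C/k^10. -/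
open MeasureTheory ProbabilityTheory

/-- The scales `s_0 = 1`, `s_k = k^10 · 2^(2k²)` for `k ≥ 1`. -/
def sc (k : ℕ) : ℕ := if k = 0 then 1 else k ^ 10 * 2 ^ (2 * k ^ 2)

/-- The annulus `A_k = {x ∈ ℤ² : 2^(k²) ≤ |x| ≤ k^10 · 2^(k²)}`. -/
def annulus (k : ℕ) : Set (ℤ × ℤ) :=
  {x | (2 : ℝ) ^ (k ^ 2) ≤ znorm x ∧ znorm x ≤ (k : ℝ) ^ 10 * 2 ^ (k ^ 2)}

namespace SRW

def steps : Finset (ℤ × ℤ) := {(1,0), (-1,0), (0,1), (0,-1)}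

lemma measZ (s : Set (ℤ × ℤ)) : MeasurableSet s := s.to_countable.measurableSet

lemma stepDist_apply (s : Set (ℤ × ℤ)) :
    stepDist s = 4⁻¹ * (s.indicator 1 (1,0) + s.indicator 1 (-1,0)
      + s.indicator 1 (0,1) + s.indicator 1 (0,-1)) := by
  simp [stepDist, Measure.add_apply, Measure.dirac_apply' _ (measZ s), mul_add]

lemma stepDist_singleton {a : ℤ × ℤ} (ha : a ∈ steps) : stepDist {a} = 4⁻¹ := by
  fin_cases ha <;>
    · rw [stepDist_apply]
      norm_num [Set.indicator_apply, Prod.ext_iff]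

lemma stepDist_compl : stepDist ((steps : Set (ℤ × ℤ)))ᶜ = 0 := by
  rw [stepDist_apply]
  have h1 : ((1:ℤ),(0:ℤ)) ∈ steps := by decide
  have h2 : ((-1:ℤ),(0:ℤ)) ∈ steps := by decide
  have h3 : ((0:ℤ),(1:ℤ)) ∈ steps := by decide
  have h4 : ((0:ℤ),(-1:ℤ)) ∈ steps := by decide
  simp [Set.indicator_apply, h1, h2, h3, h4]

def cntSet (n : ℕ) (P : ℤ × ℤ → Prop) : Set (Fin n → steps) :=
  {σ | P (∑ j, (σ j : ℤ × ℤ))}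

noncomputable def cnt (n : ℕ) (P : ℤ × ℤ → Prop) : ℕ := (cntSet n P).ncard

def Q (p : ℤ × ℤ) : ℤ := p.1 ^ 2 + p.2 ^ 2

lemma Q_nonneg (p : ℤ × ℤ) : 0 ≤ Q p := by unfold Q; positivity

lemma walk_eq {Ω : Type} (X : ℕ → Ω → ℤ × ℤ) (x : ℤ × ℤ) (n : ℕ) (ω : Ω) :
    walkFrom X x n ω = x + ∑ j : Fin n, X (j + 1) ω := by
  unfold walkFrom
  congr 1
  rw [← Finset.Ico_add_one_right_eq_Icc, Finset.sum_Ico_eq_sum_range,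
    Fin.sum_univ_eq_sum_range (fun j => X (j + 1) ω) n]
  exact Finset.sum_congr (by norm_num) fun i _ => by rw [add_comm]

lemma walk_count {Ω : Type} [MeasurableSpace Ω] (μ : Measure Ω) [IsProbabilityMeasure μ]
    (X : ℕ → Ω → ℤ × ℤ) (hm : ∀ i, Measurable (X i)) (hd : ∀ i, μ.map (X i) = stepDist)
    (hI : iIndepFun X μ) (x : ℤ × ℤ) (n : ℕ) (B : Set (ℤ × ℤ)) :
    μ {ω | walkFrom X x n ω ∈ B}
      = (cnt n (fun p => x + p ∈ B) : ENNReal) * (4 : ENNReal)⁻¹ ^ n := by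
  classical
  set E : (Fin n → steps) → Set Ω :=
    fun σ => ⋂ j : Fin n, X (j + 1) ⁻¹' {(σ j : ℤ × ℤ)} with hE
  have hEmeas : ∀ σ, MeasurableSet (E σ) :=
    fun σ => MeasurableSet.iInter fun j => (hm _) (measZ _)
  have hEmeasure : ∀ σ : Fin n → steps, μ (E σ) = (4 : ENNReal)⁻¹ ^ n := by
    intro σ
    set g : ℕ → ℤ × ℤ := fun i => if h : i - 1 < n then (σ ⟨i - 1, h⟩ : ℤ × ℤ) else 0 with hg
    have hset : E σ = ⋂ i ∈ Finset.Icc 1 n, X i ⁻¹' {g i} := by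
      ext ω
      simp only [hE, Set.mem_iInter, Set.mem_preimage, Set.mem_singleton_iff,
        Finset.mem_Icc]
      constructor
      · rintro h i ⟨h1, h2⟩
        have hlt : i - 1 < n := by omega
        have : i = (⟨i - 1, hlt⟩ : Fin n).1 + 1 := by simp; omega
        rw [this]
        have := h ⟨i - 1, hlt⟩
        rw [this, hg]
        simp only [Nat.add_sub_cancel]
        rw [dif_pos hlt]
      · intro h j
        have := h (j.1 + 1) ⟨by omega, by omega⟩
        rw [this, hg]
        simp only [Nat.add_sub_cancel]
        rw [dif_pos j.2]
    rw [hset]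
    rw [hI.meas_biInter (S := Finset.Icc 1 n) (s := fun i => X i ⁻¹' {g i})
      (fun i _ => ⟨{g i}, measZ _, rfl⟩)]
    have hone : ∀ i ∈ Finset.Icc 1 n, μ (X i ⁻¹' {g i}) = (4 : ENNReal)⁻¹ := by
      intro i hi
      rw [← Measure.map_apply (hm i) (measZ _), hd i]
      apply stepDist_singleton
      rw [Finset.mem_Icc] at hi
      have hlt : i - 1 < n := by omega
      rw [hg]
      simp only [hlt, dif_pos]
      exact (σ ⟨i - 1, hlt⟩).2
    rw [Finset.prod_congr rfl hone, Finset.prod_const, Nat.card_Icc]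
    simp
  set G : Set Ω := {ω | ∀ j : Fin n, X (j + 1) ω ∈ steps} with hGdef
  have hGc : μ Gᶜ = 0 := by
    have hsub : Gᶜ ⊆ ⋃ j : Fin n, X (j + 1) ⁻¹' ((steps : Set (ℤ × ℤ)))ᶜ := by
      intro ω hω
      simp only [hGdef, Set.mem_compl_iff, Set.mem_setOf_eq, not_forall] at hω
      obtain ⟨j, hj⟩ := hω
      exact Set.mem_iUnion.2 ⟨j, hj⟩
    refine measure_mono_null hsub (measure_iUnion_null fun j => ?_)
    rw [← Measure.map_apply (hm _) (measZ _), hd _]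
    exact stepDist_compl
  set F : Finset (Fin n → steps) :=
    Finset.filter (fun σ => x + ∑ j, (σ j : ℤ × ℤ) ∈ B) Finset.univ with hF
  have hkey : {ω | walkFrom X x n ω ∈ B} ∩ G = ⋃ σ ∈ F, E σ := by
    ext ω
    simp only [Set.mem_inter_iff, Set.mem_setOf_eq, Set.mem_iUnion, hGdef, hF, hE,
      Finset.mem_filter, Finset.mem_univ, true_and, Set.mem_iInter, Set.mem_preimage,
      Set.mem_singleton_iff]
    constructor
    · rintro ⟨hB, hG⟩
      refine ⟨fun j => ⟨X (j + 1) ω, hG j⟩, ?_, fun j => rfl⟩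
      rwa [walk_eq] at hB
    · rintro ⟨σ, hσ, hval⟩
      constructor
      · rw [walk_eq]
        have : ∑ j : Fin n, X (j + 1) ω = ∑ j, (σ j : ℤ × ℤ) :=
          Finset.sum_congr rfl fun j _ => hval j
        rwa [this]
      · intro j; rw [hval j]; exact (σ j).2
  have hdisj : (↑F : Set (Fin n → steps)).PairwiseDisjoint E := by
    intro σ _ τ _ hne
    refine Set.disjoint_left.2 fun ω hσ hτ => hne ?_
    funext j
    simp only [hE, Set.mem_iInter, Set.mem_preimage, Set.mem_singleton_iff] at hσ hτ
    exact Subtype.ext ((hσ j).symm.trans (hτ j))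
  have h1 : μ {ω | walkFrom X x n ω ∈ B} = μ ({ω | walkFrom X x n ω ∈ B} ∩ G) := by
    refine le_antisymm ?_ (measure_mono Set.inter_subset_left)
    calc μ {ω | walkFrom X x n ω ∈ B}
        ≤ μ (({ω | walkFrom X x n ω ∈ B} ∩ G) ∪ Gᶜ) := by
          refine measure_mono fun ω h => ?_
          by_cases hg : ω ∈ G
          · exact Or.inl ⟨h, hg⟩
          · exact Or.inr hg
      _ ≤ μ ({ω | walkFrom X x n ω ∈ B} ∩ G) + μ Gᶜ := measure_union_le _ _
      _ = μ ({ω | walkFrom X x n ω ∈ B} ∩ G) := by rw [hGc, add_zero]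
  have hcnt : cnt n (fun p => x + p ∈ B) = F.card := by
    rw [cnt, show cntSet n (fun p => x + p ∈ B) = ↑F from ?_, Set.ncard_coe_finset]
    ext σ
    simp [cntSet, hF]
  rw [h1, hkey, measure_biUnion_finset hdisj fun σ _ => hEmeas σ]
  rw [Finset.sum_congr rfl fun σ _ => hEmeasure σ, Finset.sum_const, nsmul_eq_mul, hcnt]

lemma sum_steps_Q (y : ℤ × ℤ) : ∑ s ∈ steps, Q (y + s) = 4 * Q y + 4 := by
  rw [show steps = insert ((1:ℤ),(0:ℤ)) (insert ((-1:ℤ),(0:ℤ))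
    (insert ((0:ℤ),(1:ℤ)) {((0:ℤ),(-1:ℤ))})) from rfl]
  rw [Finset.sum_insert (by decide), Finset.sum_insert (by decide),
    Finset.sum_insert (by decide), Finset.sum_singleton]
  simp only [Q, Prod.fst_add, Prod.snd_add]
  ring

lemma sum_Q (n : ℕ) (x : ℤ × ℤ) :
    ∑ σ : Fin n → steps, Q (x + ∑ j, (σ j : ℤ × ℤ)) = 4 ^ n * (Q x + n) := by
  induction n generalizing x with
  | zero => simp
  | succ n ih =>
    have key := Fintype.sum_equiv (Fin.consEquiv fun _ : Fin (n+1) => { x // x ∈ steps })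
      (fun p : steps × (Fin n → steps) => Q ((x + p.1) + ∑ j, (p.2 j : ℤ × ℤ)))
      (fun σ : Fin (n+1) → steps => Q (x + ∑ j, (σ j : ℤ × ℤ)))
      (fun p => by
        simp only [Fin.consEquiv_apply]
        rw [Fin.sum_univ_succ]
        simp only [Fin.cons_zero, Fin.cons_succ, add_assoc])
    rw [← key, Fintype.sum_prod_type]
    have hins : ∀ s : steps, ∑ τ : Fin n → steps, Q ((x + s) + ∑ j, (τ j : ℤ × ℤ))
        = 4 ^ n * (Q (x + s) + n) := fun s => ih (x + s)
    rw [Finset.sum_congr rfl fun s _ => hins s]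
    rw [← Finset.mul_sum, Finset.sum_add_distrib, Finset.sum_const, Finset.card_univ]
    have hcard : Fintype.card steps = 4 := by rw [Fintype.card_coe]; rfl
    rw [hcard, Finset.sum_coe_sort steps (fun s => Q (x + s)), sum_steps_Q]
    push_cast
    ring

lemma cnt_mono {n : ℕ} {P R : ℤ × ℤ → Prop} (h : ∀ p, P p → R p) : cnt n P ≤ cnt n R :=
  Set.ncard_le_ncard (fun σ hσ => h _ hσ) (Set.toFinite _)

lemma cnt_union {n : ℕ} {P R : ℤ × ℤ → Prop} :
    cnt n (fun p => P p ∨ R p) ≤ cnt n P + cnt n R := by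
  have : cntSet n (fun p => P p ∨ R p) = cntSet n P ∪ cntSet n R := rfl
  unfold cnt
  rw [this]
  exact Set.ncard_union_le _ _

private lemma markov_aux {α : Type*} [Fintype α] (f : α → ℤ) (hf : ∀ a, 0 ≤ f a) (R : ℤ)
    (F : Finset α) (hF : ∀ σ ∈ F, R ^ 2 < f σ) : (F.card : ℤ) * R ^ 2 ≤ ∑ a : α, f a := by
  calc (F.card : ℤ) * R ^ 2 = ∑ _a ∈ F, R ^ 2 := by rw [Finset.sum_const, nsmul_eq_mul]
    _ ≤ ∑ a ∈ F, f a := Finset.sum_le_sum fun a ha => le_of_lt (hF a ha)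
    _ ≤ ∑ a : α, f a :=
        Finset.sum_le_sum_of_subset_of_nonneg (Finset.subset_univ F) fun a _ _ => hf a

lemma count_far (n : ℕ) (R : ℤ) {P : ℤ × ℤ → Prop} (hP : ∀ p, P p → R ^ 2 < Q p) :
    (cnt n P : ℤ) * R ^ 2 ≤ 4 ^ n * n := by
  have hfin := (cntSet n P).toFinite
  have hcnt : cnt n P = hfin.toFinset.card := Set.ncard_eq_toFinset_card _ hfin
  have step4 : ∑ σ : Fin n → steps, Q (∑ j, (σ j : ℤ × ℤ)) = 4 ^ n * n := by
    have : ∑ σ : Fin n → steps, Q (∑ j, (σ j : ℤ × ℤ))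
        = ∑ σ : Fin n → steps, Q ((0 : ℤ × ℤ) + ∑ j, (σ j : ℤ × ℤ)) := by simp
    rw [this, sum_Q n 0]
    simp [Q]
  rw [hcnt, ← step4]
  exact markov_aux _ (fun _ => Q_nonneg _) R _
    (fun σ hσ => hP _ ((Set.Finite.mem_toFinset hfin).1 hσ))

lemma cb (m : ℕ) : (3 * m + 1) * (Nat.centralBinom m) ^ 2 ≤ 16 ^ m := by
  induction m with
  | zero => simp [Nat.centralBinom]
  | succ m ih =>
    have key := Nat.succ_mul_centralBinom_succ m
    have hpos : 0 < (m + 1) ^ 2 := by positivity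
    refine Nat.le_of_mul_le_mul_left ?_ hpos
    have lhs_eq : (m + 1) ^ 2 * ((3 * (m + 1) + 1) * (Nat.centralBinom (m + 1)) ^ 2)
        = (3 * m + 4) * ((m + 1) * Nat.centralBinom (m + 1)) ^ 2 := by ring
    rw [lhs_eq, key]
    have expand : (3 * m + 4) * (2 * (2 * m + 1) * Nat.centralBinom m) ^ 2
        = ((3 * m + 4) * 4 * (2 * m + 1) ^ 2) * (Nat.centralBinom m) ^ 2 := by ring
    rw [expand]
    have coeff : (3 * m + 4) * 4 * (2 * m + 1) ^ 2 ≤ 16 * (m + 1) ^ 2 * (3 * m + 1) := by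
      nlinarith
    calc ((3 * m + 4) * 4 * (2 * m + 1) ^ 2) * (Nat.centralBinom m) ^ 2
        ≤ (16 * (m + 1) ^ 2 * (3 * m + 1)) * (Nat.centralBinom m) ^ 2 :=
          Nat.mul_le_mul_right _ coeff
      _ = 16 * (m + 1) ^ 2 * ((3 * m + 1) * (Nat.centralBinom m) ^ 2) := by ring
      _ ≤ 16 * (m + 1) ^ 2 * 16 ^ m := Nat.mul_le_mul_left _ ih
      _ = (m + 1) ^ 2 * 16 ^ (m + 1) := by ring

lemma mid (n : ℕ) : (n + 1) * (n.choose (n / 2)) ^ 2 ≤ 2 * 4 ^ n := by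
  rcases Nat.even_or_odd n with ⟨m, hm⟩ | ⟨m, hm⟩
  · subst hm
    have h2 : (m + m) / 2 = m := by omega
    rw [h2]
    have hc : (m + m).choose m = Nat.centralBinom m := by
      rw [Nat.centralBinom]; congr 1; omega
    rw [hc]
    have h16 : (4:ℕ) ^ (m + m) = 16 ^ m := by
      rw [show (16:ℕ) = 4 * 4 from rfl, mul_pow, ← pow_add]
    rw [h16]
    calc (m + m + 1) * (Nat.centralBinom m) ^ 2
        ≤ (3 * m + 1) * (Nat.centralBinom m) ^ 2 := by
          apply Nat.mul_le_mul_right; omega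
      _ ≤ 16 ^ m := cb m
      _ ≤ 2 * 16 ^ m := by omega
  · subst hm
    have h2 : (2 * m + 1) / 2 = m := by omega
    rw [h2]
    have hch : (2 * m + 1).choose m ≤ 2 * Nat.centralBinom m := by
      rcases m with _ | m'
      · simp [Nat.centralBinom]
      · have : (2 * (m' + 1) + 1) = (2 * (m' + 1)) + 1 := rfl
        rw [this, Nat.choose_succ_succ' (2 * (m' + 1)) m']
        have e1 : (2 * (m' + 1)).choose m' ≤ (2 * (m' + 1)).choose ((2 * (m' + 1)) / 2) :=
          Nat.choose_le_middle _ _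
        have e2 : (2 * (m' + 1)).choose (m' + 1) ≤ (2 * (m' + 1)).choose ((2 * (m' + 1)) / 2) :=
          Nat.choose_le_middle _ _
        have h3 : (2 * (m' + 1)) / 2 = m' + 1 := by omega
        rw [h3] at e1 e2
        have hcb : (2 * (m' + 1)).choose (m' + 1) = Nat.centralBinom (m' + 1) := rfl
        rw [hcb] at e1 e2
        omega
    have h16 : (4:ℕ) ^ (2 * m + 1) = 4 * 16 ^ m := by
      rw [pow_succ, pow_mul]
      norm_num [mul_comm]
    rw [h16]
    have hcb16 := cb m
    calc (2 * m + 1 + 1) * ((2 * m + 1).choose m) ^ 2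
        ≤ (2 * m + 2) * (2 * Nat.centralBinom m) ^ 2 := by
          apply Nat.mul_le_mul (le_refl _)
          exact Nat.pow_le_pow_left hch 2
      _ = (8 * m + 8) * (Nat.centralBinom m) ^ 2 := by ring
      _ ≤ 8 * ((3 * m + 1) * (Nat.centralBinom m) ^ 2) := by
          apply le_trans (Nat.mul_le_mul_right _ (show 8 * m + 8 ≤ 8 * (3 * m + 1) by omega))
          rw [mul_assoc]
      _ ≤ 8 * 16 ^ m := Nat.mul_le_mul_left _ hcb16
      _ = 2 * (4 * 16 ^ m) := by ring

lemma card_S (n : ℕ) (c : ℤ) :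
    (Finset.univ.filter (fun A : Finset (Fin n) => 2 * (A.card : ℤ) = c)).card
      ≤ n.choose (n / 2) := by
  by_cases h : (Finset.univ.filter (fun A : Finset (Fin n) => 2 * (A.card : ℤ) = c)).Nonempty
  · obtain ⟨A, hA⟩ := h
    rw [Finset.mem_filter] at hA
    refine le_trans (Finset.card_le_card (t := Finset.univ.powersetCard A.card) ?_) ?_
    · intro B hB
      rw [Finset.mem_filter] at hB
      rw [Finset.mem_powersetCard]
      refine ⟨Finset.subset_univ _, ?_⟩
      have := hA.2
      have := hB.2
      omega
    · rw [Finset.card_powersetCard, Finset.card_univ, Fintype.card_fin]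
      exact Nat.choose_le_middle _ _
  · rw [Finset.not_nonempty_iff_eq_empty] at h
    rw [h]
    simp

lemma step_pm : ∀ s ∈ steps,
    (s.1 + s.2 = 1 ∨ s.1 + s.2 = -1) ∧ (s.1 - s.2 = 1 ∨ s.1 - s.2 = -1) := by decide

lemma step_det : ∀ s ∈ steps, ∀ t ∈ steps,
    s.1 + s.2 = t.1 + t.2 → s.1 - s.2 = t.1 - t.2 → s = t := by decide

lemma sum_pm_card {n : ℕ} (u : Fin n → ℤ) (hu : ∀ j, u j = 1 ∨ u j = -1) :
    2 * ((Finset.univ.filter (fun j => u j = 1)).card : ℤ) = n + ∑ j, u j := by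
  classical
  have hsplit := Finset.sum_filter_add_sum_filter_not Finset.univ (fun j => u j = 1) u
  have h1 : ∑ j ∈ Finset.univ.filter (fun j => u j = 1), u j
      = ((Finset.univ.filter (fun j => u j = 1)).card : ℤ) := by
    rw [Finset.sum_congr rfl (fun j hj => (Finset.mem_filter.1 hj).2), Finset.sum_const,
      nsmul_eq_mul, mul_one]
  have h2 : ∑ j ∈ Finset.univ.filter (fun j => ¬ u j = 1), u j
      = -(((Finset.univ.filter (fun j => ¬ u j = 1)).card : ℤ)) := by
    rw [Finset.sum_congr rfl (fun j hj => show u j = -1 from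
      (hu j).resolve_left (Finset.mem_filter.1 hj).2), Finset.sum_const, nsmul_eq_mul]
    ring
  have hcards := Finset.card_filter_add_card_filter_not
    (s := (Finset.univ : Finset (Fin n))) (fun j => u j = 1)
  rw [Finset.card_univ, Fintype.card_fin] at hcards
  rw [h1, h2] at hsplit
  omega

lemma cnt_endpoint (n : ℕ) (y : ℤ × ℤ) :
    cnt n (fun p => p = y) ≤ (n.choose (n / 2)) ^ 2 := by
  classical
  set S1 := Finset.univ.filter
    (fun A : Finset (Fin n) => 2 * (A.card : ℤ) = n + (y.1 + y.2)) with hS1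
  set S2 := Finset.univ.filter
    (fun A : Finset (Fin n) => 2 * (A.card : ℤ) = n + (y.1 - y.2)) with hS2
  have hmap : cnt n (fun p => p = y) ≤ ((↑(S1 ×ˢ S2) : Set (Finset (Fin n) × Finset (Fin n)))).ncard := by
    refine Set.ncard_le_ncard_of_injOn
      (fun σ => (Finset.univ.filter (fun j => (σ j : ℤ × ℤ).1 + (σ j : ℤ × ℤ).2 = 1),
                 Finset.univ.filter (fun j => (σ j : ℤ × ℤ).1 - (σ j : ℤ × ℤ).2 = 1)))
      ?_ ?_ (Set.toFinite _)
    · intro σ hσ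
      have hsum : ∑ j, (σ j : ℤ × ℤ) = y := hσ
      have hu := sum_pm_card (fun j => (σ j : ℤ × ℤ).1 + (σ j : ℤ × ℤ).2)
        (fun j => (step_pm _ (σ j).2).1)
      have hv := sum_pm_card (fun j => (σ j : ℤ × ℤ).1 - (σ j : ℤ × ℤ).2)
        (fun j => (step_pm _ (σ j).2).2)
      have hufst : ∑ j, ((σ j : ℤ × ℤ).1 + (σ j : ℤ × ℤ).2) = y.1 + y.2 := by
        rw [Finset.sum_add_distrib, ← Prod.fst_sum, ← Prod.snd_sum, hsum]
      have hvfst : ∑ j, ((σ j : ℤ × ℤ).1 - (σ j : ℤ × ℤ).2) = y.1 - y.2 := by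
        rw [Finset.sum_sub_distrib, ← Prod.fst_sum, ← Prod.snd_sum, hsum]
      rw [hufst] at hu
      rw [hvfst] at hv
      rw [Finset.mem_coe, Finset.mem_product]
      constructor
      · rw [hS1, Finset.mem_filter]; exact ⟨Finset.mem_univ _, hu⟩
      · rw [hS2, Finset.mem_filter]; exact ⟨Finset.mem_univ _, hv⟩
    · intro σ _ τ _ heq
      rw [Prod.mk.injEq] at heq
      funext j
      apply Subtype.ext
      apply step_det _ (σ j).2 _ (τ j).2
      · by_cases hj : (σ j : ℤ × ℤ).1 + (σ j : ℤ × ℤ).2 = 1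
        · have hjmem : j ∈ Finset.univ.filter
              (fun j => (σ j : ℤ × ℤ).1 + (σ j : ℤ × ℤ).2 = 1) :=
            Finset.mem_filter.2 ⟨Finset.mem_univ _, hj⟩
          rw [heq.1] at hjmem
          rw [hj, (Finset.mem_filter.1 hjmem).2]
        · have hjmem : j ∉ Finset.univ.filter
              (fun j => (σ j : ℤ × ℤ).1 + (σ j : ℤ × ℤ).2 = 1) := by
            simp [Finset.mem_filter, hj]
          rw [heq.1] at hjmem
          have hτj : ¬ (τ j : ℤ × ℤ).1 + (τ j : ℤ × ℤ).2 = 1 := by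
            intro hc
            exact hjmem (Finset.mem_filter.2 ⟨Finset.mem_univ _, hc⟩)
          have e1 := ((step_pm _ (σ j).2).1).resolve_left hj
          have e2 := ((step_pm _ (τ j).2).1).resolve_left hτj
          rw [e1, e2]
      · by_cases hj : (σ j : ℤ × ℤ).1 - (σ j : ℤ × ℤ).2 = 1
        · have hjmem : j ∈ Finset.univ.filter
              (fun j => (σ j : ℤ × ℤ).1 - (σ j : ℤ × ℤ).2 = 1) :=
            Finset.mem_filter.2 ⟨Finset.mem_univ _, hj⟩
          rw [heq.2] at hjmem
          rw [hj, (Finset.mem_filter.1 hjmem).2]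
        · have hjmem : j ∉ Finset.univ.filter
              (fun j => (σ j : ℤ × ℤ).1 - (σ j : ℤ × ℤ).2 = 1) := by
            simp [Finset.mem_filter, hj]
          rw [heq.2] at hjmem
          have hτj : ¬ (τ j : ℤ × ℤ).1 - (τ j : ℤ × ℤ).2 = 1 := by
            intro hc
            exact hjmem (Finset.mem_filter.2 ⟨Finset.mem_univ _, hc⟩)
          have e1 := ((step_pm _ (σ j).2).2).resolve_left hj
          have e2 := ((step_pm _ (τ j).2).2).resolve_left hτj
          rw [e1, e2]
  rw [Set.ncard_coe_finset, Finset.card_product] at hmap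
  refine le_trans hmap ?_
  rw [pow_two]
  exact Nat.mul_le_mul (card_S n _) (card_S n _)

lemma cnt_endpoint' (n : ℕ) (y : ℤ × ℤ) :
    (n + 1) * cnt n (fun p => p = y) ≤ 2 * 4 ^ n :=
  le_trans (Nat.mul_le_mul_left _ (cnt_endpoint n y)) (mid n)

lemma cnt_disk (n : ℕ) {P : ℤ × ℤ → Prop} (E : Finset (ℤ × ℤ)) (hP : ∀ p, P p → p ∈ E) :
    (n + 1) * cnt n P ≤ E.card * (2 * 4 ^ n) := by
  classical
  have h1 : cnt n P ≤ ∑ y ∈ E, cnt n (fun p => p = y) := by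
    have hfin := (cntSet n P).toFinite
    rw [cnt, Set.ncard_eq_toFinset_card _ hfin]
    refine le_trans (Finset.card_le_card
      (t := E.biUnion fun y => ((cntSet n (fun p => p = y)).toFinite).toFinset) ?_) ?_
    · intro σ hσ
      have hmem : P (∑ j, (σ j : ℤ × ℤ)) := (hfin.mem_toFinset).1 hσ
      refine Finset.mem_biUnion.2 ⟨∑ j, (σ j : ℤ × ℤ), hP _ hmem, ?_⟩
      rw [Set.Finite.mem_toFinset]
      exact rfl
    · refine le_trans Finset.card_biUnion_le (Finset.sum_le_sum fun y _ => ?_)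
      exact le_of_eq (Set.ncard_eq_toFinset_card _ _).symm
  calc (n + 1) * cnt n P ≤ (n + 1) * ∑ y ∈ E, cnt n (fun p => p = y) :=
        Nat.mul_le_mul_left _ h1
    _ = ∑ y ∈ E, (n + 1) * cnt n (fun p => p = y) := Finset.mul_sum _ _ _
    _ ≤ ∑ _y ∈ E, 2 * 4 ^ n := Finset.sum_le_sum fun y _ => cnt_endpoint' n y
    _ = E.card * (2 * 4 ^ n) := by rw [Finset.sum_const, smul_eq_mul]

lemma znorm_nonneg (p : ℤ × ℤ) : 0 ≤ znorm p := Real.sqrt_nonneg _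

lemma znorm_sq (p : ℤ × ℤ) : znorm p ^ 2 = (Q p : ℝ) := by
  rw [znorm, Real.sq_sqrt (by positivity)]
  push_cast [Q]
  ring

lemma znorm_add_le (a b : ℤ × ℤ) : znorm (a + b) ≤ znorm a + znorm b := by
  have ha : Real.sqrt ((a.1:ℝ)^2 + (a.2:ℝ)^2) ^ 2 = (a.1:ℝ)^2 + (a.2:ℝ)^2 :=
    Real.sq_sqrt (by positivity)
  have hb : Real.sqrt ((b.1:ℝ)^2 + (b.2:ℝ)^2) ^ 2 = (b.1:ℝ)^2 + (b.2:ℝ)^2 :=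
    Real.sq_sqrt (by positivity)
  have hcs : (a.1:ℝ) * (b.1:ℝ) + (a.2:ℝ) * (b.2:ℝ)
      ≤ Real.sqrt ((a.1:ℝ)^2 + (a.2:ℝ)^2) * Real.sqrt ((b.1:ℝ)^2 + (b.2:ℝ)^2) := by
    rw [← Real.sqrt_mul (by positivity)]
    rcases le_or_gt ((a.1:ℝ) * (b.1:ℝ) + (a.2:ℝ) * (b.2:ℝ)) 0 with hneg | hpos
    · exact le_trans hneg (Real.sqrt_nonneg _)
    · rw [show ((a.1:ℝ)*(b.1:ℝ) + (a.2:ℝ)*(b.2:ℝ))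
          = Real.sqrt (((a.1:ℝ)*(b.1:ℝ) + (a.2:ℝ)*(b.2:ℝ))^2) from
          (Real.sqrt_sq (le_of_lt hpos)).symm]
      apply Real.sqrt_le_sqrt
      nlinarith [sq_nonneg ((a.1:ℝ)*(b.2:ℝ) - (a.2:ℝ)*(b.1:ℝ))]
  have key : (((a+b).1:ℝ))^2 + (((a+b).2:ℝ))^2
      ≤ (Real.sqrt ((a.1:ℝ)^2 + (a.2:ℝ)^2) + Real.sqrt ((b.1:ℝ)^2 + (b.2:ℝ)^2))^2 := by
    simp only [Prod.fst_add, Prod.snd_add]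
    push_cast
    nlinarith [ha, hb, hcs]
  calc znorm (a + b) = Real.sqrt ((((a+b).1:ℝ))^2 + (((a+b).2:ℝ))^2) := rfl
    _ ≤ Real.sqrt ((Real.sqrt ((a.1:ℝ)^2 + (a.2:ℝ)^2)
          + Real.sqrt ((b.1:ℝ)^2 + (b.2:ℝ)^2))^2) := Real.sqrt_le_sqrt key
    _ = znorm a + znorm b := Real.sqrt_sq (by positivity)

end SRW

namespace SRW

lemma sq_facts (k : ℕ) (hk : 2 ≤ k) :
    4 ≤ k ^ 2 ∧ (k - 1) ^ 2 + 1 ≤ k ^ 2 ∧ (k - 1) ^ 2 + 3 ≤ k ^ 2 := by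
  obtain ⟨m, rfl⟩ : ∃ m, k = m + 2 := ⟨k - 2, by omega⟩
  have h1 : m + 2 - 1 = m + 1 := by omega
  rw [h1]
  refine ⟨by nlinarith, by nlinarith, by nlinarith⟩

lemma key (k : ℕ) (hk : 2 ≤ k) (x : ℤ × ℤ) (hx : x ∈ annulus (k - 1)) (n : ℕ)
    (hn : n = sc k - sc (k - 1)) :
    ((cnt n (fun p => x + p ∈ (annulus k)ᶜ) : ℝ)) * ((4 : ℝ)⁻¹) ^ n
      ≤ 40 / (k : ℝ) ^ 10 := by
  obtain ⟨K2, hK2⟩ : ∃ c, k ^ 2 = c := ⟨_, rfl⟩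
  obtain ⟨hK2big, hexp1, hexp3⟩ :
      4 ≤ K2 ∧ (k - 1) ^ 2 + 1 ≤ K2 ∧ (k - 1) ^ 2 + 3 ≤ K2 := by
    rw [← hK2]; exact sq_facts k hk
  obtain ⟨lo, hlo⟩ : ∃ c : ℤ, (2 : ℤ) ^ K2 = c := ⟨_, rfl⟩
  obtain ⟨Rz, hRz⟩ : ∃ c : ℤ, (k : ℤ) ^ 10 * 2 ^ (K2 - 1) = c := ⟨_, rfl⟩
  have hRzR : ((Rz : ℤ) : ℝ) = (k : ℝ) ^ 10 * 2 ^ (K2 - 1) := by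
    rw [← hRz]; push_cast; ring
  have hRz2 : ((Rz : ℤ) : ℝ) * 2 = (k : ℝ) ^ 10 * 2 ^ K2 := by
    rw [hRzR, mul_assoc, ← pow_succ]
    congr 2
    omega
  have hloR : ((lo : ℤ) : ℝ) = (2 : ℝ) ^ (k ^ 2) := by
    rw [← hlo, hK2]; push_cast; ring
  -- bound on the starting point
  have hxnorm : znorm x ≤ ((Rz : ℤ) : ℝ) := by
    refine le_trans hx.2 ?_
    rw [hRzR]
    have hb1 : ((k - 1 : ℕ) : ℝ) ^ 10 ≤ (k : ℝ) ^ 10 := by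
      apply pow_le_pow_left₀ (by positivity)
      exact_mod_cast Nat.sub_le k 1
    have hb2 : (2 : ℝ) ^ ((k - 1) ^ 2) ≤ (2 : ℝ) ^ (K2 - 1) := by
      apply pow_le_pow_right₀ one_le_two
      omega
    exact mul_le_mul hb1 hb2 (by positivity) (by positivity)
  -- splitting the complement event
  have hsplit : ∀ p : ℤ × ℤ, (x + p ∈ (annulus k)ᶜ) →
      (znorm (x + p) < ((lo : ℤ) : ℝ) ∨ Rz ^ 2 < Q p) := by
    intro p hp
    simp only [annulus, Set.mem_compl_iff, Set.mem_setOf_eq, not_and_or, not_le] at hp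
    rcases hp with hlow | hhigh
    · left
      rw [hloR]
      exact hlow
    · right
      have htri := znorm_add_le x p
      have hhigh' : (k : ℝ) ^ 10 * 2 ^ K2 < znorm (x + p) := by
        rw [← hK2]
        exact hhigh
      have h1 : ((Rz : ℤ) : ℝ) < znorm p := by nlinarith
      have hR0 : (0 : ℝ) ≤ ((Rz : ℤ) : ℝ) := by rw [hRzR]; positivity
      have h2 : ((Rz : ℤ) : ℝ) ^ 2 < znorm p ^ 2 := by nlinarith
      rw [znorm_sq] at h2
      exact_mod_cast h2
  have hNle : cnt n (fun p => x + p ∈ (annulus k)ᶜ)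
      ≤ cnt n (fun p => znorm (x + p) < ((lo : ℤ) : ℝ)) + cnt n (fun p => Rz ^ 2 < Q p) :=
    le_trans (cnt_mono hsplit) cnt_union
  obtain ⟨N, hNdef⟩ : ∃ c, cnt n (fun p => x + p ∈ (annulus k)ᶜ) = c := ⟨_, rfl⟩
  obtain ⟨Nnear, hNneardef⟩ : ∃ c, cnt n (fun p => znorm (x + p) < ((lo : ℤ) : ℝ)) = c :=
    ⟨_, rfl⟩
  obtain ⟨Nfar, hNfardef⟩ : ∃ c, cnt n (fun p => Rz ^ 2 < Q p) = c := ⟨_, rfl⟩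
  rw [hNdef, hNneardef, hNfardef] at hNle
  -- scale facts
  have e64 : (2 : ℕ) ^ (2 * K2) = 64 * 2 ^ (2 * K2 - 6) := by
    rw [show (64 : ℕ) = 2 ^ 6 from rfl, ← pow_add]
    congr 1
    omega
  have hsck : sc k = k ^ 10 * 2 ^ (2 * K2) := by
    rw [sc, if_neg (by omega : ¬ k = 0), hK2]
  have hsck1 : sc (k - 1) ≤ k ^ 10 * 2 ^ (2 * K2 - 6) := by
    rw [sc, if_neg (by omega : ¬ k - 1 = 0)]
    have hb1 : (k - 1) ^ 10 ≤ k ^ 10 := Nat.pow_le_pow_left (by omega) 10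
    have hb2 : (2 : ℕ) ^ (2 * (k - 1) ^ 2) ≤ 2 ^ (2 * K2 - 6) := by
      apply Nat.pow_le_pow_right (by norm_num)
      omega
    exact Nat.mul_le_mul hb1 hb2
  obtain ⟨A, hA⟩ : ∃ c, k ^ 10 * 2 ^ (2 * K2 - 6) = c := ⟨_, rfl⟩
  rw [hA] at hsck1
  have hsck64 : sc k = 64 * A := by
    rw [hsck, e64, ← hA]
    ring
  have hn1 : 32 * A ≤ n + 1 := by omega
  -- far bound (in ℤ)
  have hfar1 : (Nfar : ℤ) * Rz ^ 2 ≤ 4 ^ n * n := by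
    rw [← hNfardef]
    exact count_far n Rz (fun p h => h)
  have hfarK : (Nfar : ℤ) * (k : ℤ) ^ 10 ≤ 4 * 4 ^ n := by
    have hRzsq : Rz ^ 2 = (k : ℤ) ^ 20 * 2 ^ (2 * K2 - 2) := by
      rw [← hRz, mul_pow, ← pow_mul, ← pow_mul,
        show (10 * 2 : ℕ) = 20 from rfl, show (K2 - 1) * 2 = 2 * K2 - 2 by omega]
    have hnsc : (n : ℤ) ≤ (k : ℤ) ^ 10 * 2 ^ (2 * K2) := by
      have h0 : n ≤ sc k := by omega
      have h2 : (n : ℤ) ≤ (sc k : ℤ) := by exact_mod_cast h0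
      refine le_trans h2 (le_of_eq ?_)
      rw [hsck]
      push_cast
      ring
    have h2K : (2 : ℤ) ^ (2 * K2) = 4 * 2 ^ (2 * K2 - 2) := by
      rw [show (4 : ℤ) = 2 ^ 2 from rfl, ← pow_add]
      congr 1
      omega
    have hchain : ((Nfar : ℤ) * (k : ℤ) ^ 10) * ((k : ℤ) ^ 10 * 2 ^ (2 * K2 - 2))
        ≤ (4 * 4 ^ n) * ((k : ℤ) ^ 10 * 2 ^ (2 * K2 - 2)) := by
      calc ((Nfar : ℤ) * (k : ℤ) ^ 10) * ((k : ℤ) ^ 10 * 2 ^ (2 * K2 - 2))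
          = (Nfar : ℤ) * ((k : ℤ) ^ 20 * 2 ^ (2 * K2 - 2)) := by ring
        _ = (Nfar : ℤ) * Rz ^ 2 := by rw [hRzsq]
        _ ≤ 4 ^ n * n := hfar1
        _ ≤ 4 ^ n * ((k : ℤ) ^ 10 * 2 ^ (2 * K2)) :=
            mul_le_mul_of_nonneg_left hnsc (by positivity)
        _ = (4 * 4 ^ n) * ((k : ℤ) ^ 10 * 2 ^ (2 * K2 - 2)) := by
            rw [h2K]; ring
    have hposfac : (0 : ℤ) < (k : ℤ) ^ 10 * 2 ^ (2 * K2 - 2) := by positivity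
    exact le_of_mul_le_mul_right hchain hposfac
  -- near bound (in ℕ)
  have hEP : ∀ p : ℤ × ℤ, znorm (x + p) < ((lo : ℤ) : ℝ) →
      p ∈ (Finset.Icc (-lo - x.1) (lo - x.1)) ×ˢ (Finset.Icc (-lo - x.2) (lo - x.2)) := by
    intro p hp
    have habs : ∀ a b : ℝ, 0 ≤ b → Real.sqrt (a ^ 2 + b) < ((lo : ℤ) : ℝ) →
        |a| < ((lo : ℤ) : ℝ) := by
      intro a b hb hs
      calc |a| = Real.sqrt (a ^ 2) := (Real.sqrt_sq_eq_abs a).symm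
        _ ≤ Real.sqrt (a ^ 2 + b) := Real.sqrt_le_sqrt (by linarith)
        _ < _ := hs
    have h1 : |(((x + p).1 : ℤ) : ℝ)| < ((lo : ℤ) : ℝ) := habs _ _ (by positivity) hp
    have hp2 : Real.sqrt ((((x + p).2 : ℤ) : ℝ) ^ 2 + (((x + p).1 : ℤ) : ℝ) ^ 2)
        < ((lo : ℤ) : ℝ) := by
      rw [add_comm]
      exact hp
    have h2 : |(((x + p).2 : ℤ) : ℝ)| < ((lo : ℤ) : ℝ) := habs _ _ (by positivity) hp2
    rw [← Int.cast_abs] at h1 h2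
    have h1' : |(x + p).1| < lo := by exact_mod_cast h1
    have h2' : |(x + p).2| < lo := by exact_mod_cast h2
    rw [abs_lt] at h1' h2'
    rw [Prod.fst_add] at h1'
    rw [Prod.snd_add] at h2'
    rw [Finset.mem_product, Finset.mem_Icc, Finset.mem_Icc]
    omega
  have hdisk := cnt_disk n _ hEP
  rw [hNneardef] at hdisk
  have hEcard : ((Finset.Icc (-lo - x.1) (lo - x.1)) ×ˢ
      (Finset.Icc (-lo - x.2) (lo - x.2))).card ≤ 9 * 2 ^ (2 * K2) := by
    have hc : ∀ a : ℤ, (Finset.Icc (-lo - a) (lo - a)).card = 2 * 2 ^ K2 + 1 := by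
      intro a
      rw [Int.card_Icc, show lo - a + 1 - (-lo - a) = ((2 * 2 ^ K2 + 1 : ℕ) : ℤ) by
        rw [← hlo]; push_cast; ring]
      exact Int.toNat_natCast _
    rw [Finset.card_product, hc, hc]
    have h1 : (1 : ℕ) ≤ 2 ^ K2 := Nat.one_le_two_pow
    have h2 : (2 : ℕ) ^ (2 * K2) = 2 ^ K2 * 2 ^ K2 := by rw [two_mul, pow_add]
    nlinarith
  have hnearK : Nnear * k ^ 10 ≤ 36 * 4 ^ n := by
    have hchain : (32 * 2 ^ (2 * K2 - 6)) * (Nnear * k ^ 10)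
        ≤ (32 * 2 ^ (2 * K2 - 6)) * (36 * 4 ^ n) := by
      calc (32 * 2 ^ (2 * K2 - 6)) * (Nnear * k ^ 10)
          = (32 * A) * Nnear := by rw [← hA]; ring
        _ ≤ (n + 1) * Nnear := Nat.mul_le_mul_right _ hn1
        _ ≤ _ * (2 * 4 ^ n) := hdisk
        _ ≤ (9 * 2 ^ (2 * K2)) * (2 * 4 ^ n) := Nat.mul_le_mul_right _ hEcard
        _ = (32 * 2 ^ (2 * K2 - 6)) * (36 * 4 ^ n) := by rw [e64]; ring
    have hposB : 0 < 32 * 2 ^ (2 * K2 - 6) := by positivity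
    exact Nat.le_of_mul_le_mul_left hchain hposB
  -- put everything together
  rw [inv_pow, ← div_eq_mul_inv, div_le_div_iff₀ (by positivity) (by positivity)]
  have hb1 : (N : ℝ) ≤ (Nnear : ℝ) + (Nfar : ℝ) := by exact_mod_cast hNle
  have hb2 : (Nnear : ℝ) * (k : ℝ) ^ 10 ≤ 36 * 4 ^ n := by exact_mod_cast hnearK
  have hb3 : (Nfar : ℝ) * (k : ℝ) ^ 10 ≤ 4 * 4 ^ n := by exact_mod_cast hfarK
  have hkpos : (0 : ℝ) ≤ (k : ℝ) ^ 10 := by positivity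
  have hb4 : (N : ℝ) * (k : ℝ) ^ 10 ≤ ((Nnear : ℝ) + (Nfar : ℝ)) * (k : ℝ) ^ 10 :=
    mul_le_mul_of_nonneg_right hb1 hkpos
  have hb5 : ((Nnear : ℝ) + (Nfar : ℝ)) * (k : ℝ) ^ 10
      = (Nnear : ℝ) * (k : ℝ) ^ 10 + (Nfar : ℝ) * (k : ℝ) ^ 10 := by ring
  rw [hNdef]
  linarith

end SRW

/-- There is a constant `C > 0` such that for every `k ≥ 2` and every `x ∈ A_{k−1}`,
simple random walk on `ℤ²` started at `x` satisfies
`P(S_{s_k − s_{k−1}} ∉ A_k) ≤ C / k^10`. -/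
theorem stmt7 :
    ∃ C : ℝ, 0 < C ∧
      ∀ (Ω : Type) [MeasurableSpace Ω] (μ : Measure Ω) [IsProbabilityMeasure μ]
        (X : ℕ → Ω → ℤ × ℤ),
        (∀ i, Measurable (X i)) →
        (∀ i, μ.map (X i) = stepDist) →
        iIndepFun X μ →
        ∀ (k : ℕ), 2 ≤ k → ∀ x ∈ annulus (k - 1),
          (μ {ω | walkFrom X x (sc k - sc (k - 1)) ω ∉ annulus k}).toReal ≤
            C / k ^ 10 := by
  classical
  refine ⟨40, by norm_num, ?_⟩
  intro Ω _ μ _ X hm hd hI k hk x hx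
  have hwc := SRW.walk_count μ X hm hd hI x (sc k - sc (k - 1)) ((annulus k)ᶜ)
  have hset : {ω | walkFrom X x (sc k - sc (k - 1)) ω ∉ annulus k}
      = {ω | walkFrom X x (sc k - sc (k - 1)) ω ∈ (annulus k)ᶜ} := rfl
  rw [hset, hwc, ENNReal.toReal_mul, ENNReal.toReal_pow, ENNReal.toReal_inv,
    ENNReal.toReal_natCast, ENNReal.toReal_ofNat]
  exact SRW.key k hk x hx _ rfl
end
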